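/- arXiv:math/0601624 — 6 statements merged into one kernel-verified Lean document; each statement's English description precedes it below -/
import Mathlib

section
/- For x≥0, y≥1, l≥0, j≥0, the number of nonnegative Bernoulli paths of length l from x to y with exactly j peaks, starting with an up step and ending with a down step, equals G(l,j-1,j-1,x,y) - G(l,j-2,j,-x,y), where G(l,j1,j2,x,y)=binomial((l+y-x)/2-1, j1)·binomial((l-y+x)/2-1, j2). -/
/-- The value at time `i` of the Bernoulli path with `n` steps encoded by
`f : Fin n → Bool` (`true` = step `+1`, `false` = step `-1`), started at `0`. -/
def pathVal {n : ℕ} (f : Fin n → Bool) (i : ℕ) : ℤ :=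
  ∑ j ∈ Finset.range i, (if h : j < n then (if f ⟨j, h⟩ then (1 : ℤ) else -1) else 0)

/-- `x` is a peak: `1 ≤ x ≤ n-1` and `S(x-1) = S(x+1) = S(x) - 1`. -/
def IsPeak {n : ℕ} (f : Fin n → Bool) (x : ℕ) : Prop :=
  0 < x ∧ x < n ∧ pathVal f x = pathVal f (x - 1) + 1 ∧
    pathVal f (x + 1) = pathVal f x - 1

instance {n : ℕ} (f : Fin n → Bool) (x : ℕ) : Decidable (IsPeak f x) := by
  unfold IsPeak; infer_instance

/-- Number of peaks of the path encoded by `f`. -/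
def numPeaks {n : ℕ} (f : Fin n → Bool) : ℕ :=
  ((Finset.range n).filter (fun x => IsPeak f x)).card

/-- Integer binomial coefficient with the convention that it vanishes unless
`0 ≤ p ≤ m`. -/
def ichoose (m p : ℤ) : ℤ :=
  if 0 ≤ m ∧ 0 ≤ p then ((m.toNat).choose p.toNat : ℤ) else 0

/-- `hchoose num p = binomial (num/2 - 1) p`, with the convention that it
vanishes when `num` is odd (non-integer upper argument) or when the arguments
are out of range. -/
def hchoose (num p : ℤ) : ℤ :=
  if 2 ∣ num then ichoose (num / 2 - 1) p else 0

/-- `G(l,j₁,j₂,x,y) = binomial((l+y-x)/2 - 1, j₁) · binomial((l-y+x)/2 - 1, j₂)`. -/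
def G (l j1 j2 x y : ℤ) : ℤ := hchoose (l + y - x) j1 * hchoose (l - y + x) j2

/-- The path started at `x` stays nonnegative on `[0, n]`. -/
def IsNonnegFrom {n : ℕ} (x : ℤ) (f : Fin n → Bool) : Prop :=
  ∀ i ∈ Finset.range (n + 1), 0 ≤ x + pathVal f i

instance {n : ℕ} (x : ℤ) (f : Fin n → Bool) : Decidable (IsNonnegFrom x f) := by
  unfold IsNonnegFrom; infer_instance

namespace Aux


lemma ichoose_neg_right {m p : ℤ} (h : p < 0) : ichoose m p = 0 := by
  unfold ichoose; rw [if_neg]; omega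

lemma ichoose_pascal (a b : ℤ) (h : ¬(a = 0 ∧ b = 0)) :
    ichoose a b = ichoose (a - 1) b + ichoose (a - 1) (b - 1) := by
  unfold ichoose
  split_ifs with h1 h2 h3 h2 h3 h3 h3 <;> try (exfalso; omega)
  · -- a ≥ 1, b ≥ 1
    have ha : a.toNat = (a - 1).toNat + 1 := by omega
    have hb : b.toNat = (b - 1).toNat + 1 := by omega
    rw [ha, hb, Nat.choose_succ_succ]
    push_cast; ring
  · -- a ≥ 1, b = 0
    have hb : b = 0 := by omega
    have hb' : b.toNat = 0 := by omega
    subst hb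
    simp [hb', Nat.choose_zero_right]
  · -- a = 0, b ≥ 1
    have ha : a.toNat = 0 := by omega
    have hb : 0 < b.toNat := by omega
    rw [ha, Nat.choose_eq_zero_of_lt hb]
    simp
  · rfl

lemma hchoose_neg_right {num p : ℤ} (h : p < 0) : hchoose num p = 0 := by
  unfold hchoose; split_ifs; exacts [ichoose_neg_right h, rfl]

lemma hchoose_eq_zero_of_le_one {num : ℤ} (h : num ≤ 1) (p : ℤ) : hchoose num p = 0 := by
  unfold hchoose
  split_ifs with h1
  · unfold ichoose; rw [if_neg]; omega
  · rfl

lemma hchoose_step (num p : ℤ) (h : ¬(num = 0 ∧ p = 0)) :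
    hchoose (num + 2) p = hchoose num p + hchoose num (p - 1) := by
  unfold hchoose
  have hd : (2 : ℤ) ∣ num + 2 ↔ 2 ∣ num := by omega
  split_ifs with h1 h2 h2 <;> try (exfalso; omega)
  · have he : (num + 2) / 2 - 1 = num / 2 := by omega
    have hne : ¬(num / 2 = 0 ∧ p = 0) := by omega
    rw [he, ichoose_pascal _ _ hne]
  · rfl

lemma hchoose_two_zero (m : ℤ) : hchoose (2 * m) 0 = if 1 ≤ m then 1 else 0 := by
  unfold hchoose ichoose
  rw [if_pos ⟨m, rfl⟩]
  have : 2 * m / 2 = m := by omega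
  rw [this]
  split_ifs with h1 h2 h2 <;> try (exfalso; omega)
  · simp [Nat.choose_zero_right]
  · rfl

lemma G_zero_of_le_one {l : ℤ} (hl : l ≤ 1) (j1 j2 x y : ℤ) : G l j1 j2 x y = 0 := by
  unfold G
  rcases le_or_gt (l + y - x) 1 with h | h
  · rw [hchoose_eq_zero_of_le_one h, zero_mul]
  · rw [hchoose_eq_zero_of_le_one (by omega : l - y + x ≤ 1), mul_zero]

lemma G_neg₁ {j1 : ℤ} (h : j1 < 0) (l j2 x y : ℤ) : G l j1 j2 x y = 0 := by
  unfold G; rw [hchoose_neg_right h, zero_mul]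

lemma G_neg₂ {j2 : ℤ} (h : j2 < 0) (l j1 x y : ℤ) : G l j1 j2 x y = 0 := by
  unfold G; rw [hchoose_neg_right h, mul_zero]




lemma hchoose_zero_left (p : ℤ) : hchoose 0 p = 0 := by
  unfold hchoose ichoose
  norm_num

lemma ID (l j x y : ℤ) (hj : 0 ≤ j) :
    (G l j (j - 1) x (y + 1) - G l (j - 1) j (-x) (y + 1)
        + (if j = 0 ∧ y + 1 = x + l ∧ 1 ≤ l then 1 else 0))
      + (G l j j x (y + 1) - G l (j - 1) (j + 1) (-x) (y + 1))
    = G (l + 1) j j x y - G (l + 1) (j - 1) (j + 1) (-x) y := by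
  unfold G
  rw [show l + 1 + y - x = l + (y + 1) - x from by ring,
      show l + 1 - y + x = (l - (y + 1) + x) + 2 from by ring,
      show l + 1 + y - -x = l + (y + 1) - -x from by ring,
      show l + 1 - y + -x = (l - (y + 1) + -x) + 2 from by ring,
      hchoose_step (l - (y + 1) + -x) (j + 1) (by omega),
      show j + 1 - 1 = j from by ring]
  by_cases hex : l - (y + 1) + x = 0 ∧ j = 0
  · obtain ⟨hB, hj0⟩ := hex
    subst hj0
    rw [hB]
    rw [show (0:ℤ) + 2 = 2 * 1 from by norm_num,
        show l + (y + 1) - x = 2 * l from by omega,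
        hchoose_two_zero, hchoose_two_zero]
    simp only [hchoose_neg_right (show (0:ℤ) - 1 < 0 by norm_num), hchoose_zero_left]
    split_ifs <;> simp_all <;> omega
  · rw [hchoose_step (l - (y + 1) + x) j hex]
    rw [if_neg (by omega)]
    ring

lemma IU (l j x y : ℤ) (hj : 1 ≤ j) (hl : 1 ≤ l) (hx : 0 ≤ x) (hy : 1 ≤ y) :
    (G l j (j - 1) x (y - 1) - G l (j - 1) j (-x) (y - 1))
      + (G l (j - 1) (j - 1) x (y - 1) - G l (j - 2) j (-x) (y - 1))
    = G (l + 1) j (j - 1) x y - G (l + 1) (j - 1) j (-x) y := by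
  unfold G
  rw [show l + 1 + y - x = (l + (y - 1) - x) + 2 from by ring,
      show l + 1 - y + x = l - (y - 1) + x from by ring,
      show l + 1 + y - -x = (l + (y - 1) - -x) + 2 from by ring,
      show l + 1 - y + -x = l - (y - 1) + -x from by ring,
      hchoose_step (l + (y - 1) - x) j (by omega),
      hchoose_step (l + (y - 1) - -x) (j - 1) (by omega),
      show j - 1 - 1 = j - 2 from by ring]
  ring

lemma Gy0 (l j x : ℤ) : G l j (j - 1) x 0 - G l (j - 1) j (-x) 0 = 0 := by
  unfold G
  rw [show l + 0 - x = l - 0 + -x from by ring,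
      show l - 0 + x = l + 0 - -x from by ring]
  ring



def cntU (l j : ℕ) (x y : ℤ) : ℕ :=
  (((Finset.univ : Finset (Fin l → Bool))).filter
      (fun f => x + pathVal f l = y ∧ IsNonnegFrom x f ∧
        pathVal f 1 = 1 ∧ pathVal f l - pathVal f (l - 1) = 1 ∧
        numPeaks f = j)).card

def cntD (l j : ℕ) (x y : ℤ) : ℕ :=
  (((Finset.univ : Finset (Fin l → Bool))).filter
      (fun f => x + pathVal f l = y ∧ IsNonnegFrom x f ∧
        pathVal f 1 = 1 ∧ pathVal f l - pathVal f (l - 1) = -1 ∧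
        numPeaks f = j)).card

lemma pathVal_zero {n : ℕ} (f : Fin n → Bool) : pathVal f 0 = 0 := rfl

lemma pathVal_succ {n : ℕ} (f : Fin n → Bool) (i : ℕ) :
    pathVal f (i + 1)
      = pathVal f i + (if h : i < n then (if f ⟨i, h⟩ then (1:ℤ) else -1) else 0) :=
  Finset.sum_range_succ _ _

lemma pathVal_stable {n : ℕ} (f : Fin n → Bool) {i : ℕ} (h : n ≤ i) :
    pathVal f i = pathVal f n := by
  unfold pathVal
  refine (Finset.sum_subset (Finset.range_subset_range.2 h) ?_).symm
  intro k _ hk2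
  simp only [Finset.mem_range] at hk2
  rw [dif_neg (by omega)]

lemma pathVal_snoc {l : ℕ} (g : Fin l → Bool) (b : Bool) {i : ℕ} (hi : i ≤ l) :
    pathVal (Fin.snoc g b) i = pathVal g i := by
  unfold pathVal
  refine Finset.sum_congr rfl (fun k hk => ?_)
  simp only [Finset.mem_range] at hk
  have hkl : k < l := lt_of_lt_of_le hk hi
  rw [dif_pos (Nat.lt_succ_of_lt hkl), dif_pos hkl]
  have he : (Fin.snoc g b : Fin (l+1) → Bool) ⟨k, Nat.lt_succ_of_lt hkl⟩ = g ⟨k, hkl⟩ := by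
    have h2 : (⟨k, Nat.lt_succ_of_lt hkl⟩ : Fin (l+1)) = Fin.castSucc ⟨k, hkl⟩ := rfl
    rw [h2, Fin.snoc_castSucc]
  rw [he]

lemma pathVal_snoc_top {l : ℕ} (g : Fin l → Bool) (b : Bool) :
    pathVal (Fin.snoc g b) (l + 1) = pathVal g l + (if b then (1:ℤ) else -1) := by
  rw [pathVal_succ, dif_pos (Nat.lt_succ_self l), pathVal_snoc g b (le_refl l)]
  congr 2
  have h2 : (⟨l, Nat.lt_succ_self l⟩ : Fin (l+1)) = Fin.last l := rfl
  rw [h2, Fin.snoc_last]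

lemma step_dichotomy {l : ℕ} (g : Fin l → Bool) (hl : 1 ≤ l) :
    pathVal g l = pathVal g (l - 1) + 1 ∨ pathVal g l - pathVal g (l - 1) = -1 := by
  obtain ⟨m, rfl⟩ : ∃ m, l = m + 1 := ⟨l - 1, by omega⟩
  rw [show m + 1 - 1 = m from rfl, pathVal_succ, dif_pos (Nat.lt_succ_self m)]
  cases hb : g ⟨m, Nat.lt_succ_self m⟩ <;> simp [hb]

lemma isNonnegFrom_snoc {l : ℕ} (x : ℤ) (g : Fin l → Bool) (b : Bool) :
    IsNonnegFrom x (Fin.snoc g b)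
      ↔ IsNonnegFrom x g ∧ 0 ≤ x + pathVal (Fin.snoc g b) (l + 1) := by
  unfold IsNonnegFrom
  constructor
  · intro h
    refine ⟨fun i hi => ?_, h (l+1) (by simp)⟩
    simp only [Finset.mem_range] at hi
    have h2 := h i (by simp only [Finset.mem_range]; omega)
    rwa [pathVal_snoc g b (by omega : i ≤ l)] at h2
  · rintro ⟨h1, h2⟩ i hi
    simp only [Finset.mem_range] at hi
    rcases Nat.lt_or_ge i (l + 1) with h | h
    · rw [pathVal_snoc g b (by omega : i ≤ l)]
      exact h1 i (by simp only [Finset.mem_range]; omega)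
    · have h3 : i = l + 1 := by omega
      rw [h3]; exact h2

lemma isPeak_snoc {l : ℕ} (g : Fin l → Bool) (b : Bool) {i : ℕ} (hi : i < l) :
    IsPeak (Fin.snoc g b) i ↔ IsPeak g i := by
  unfold IsPeak
  rw [pathVal_snoc g b (by omega : i ≤ l), pathVal_snoc g b (by omega : i - 1 ≤ l),
      pathVal_snoc g b (by omega : i + 1 ≤ l)]
  constructor
  · rintro ⟨h1, _, h3, h4⟩; exact ⟨h1, hi, h3, h4⟩
  · rintro ⟨h1, _, h3, h4⟩; exact ⟨h1, by omega, h3, h4⟩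

lemma isPeak_snoc_top {l : ℕ} (g : Fin l → Bool) (b : Bool) :
    IsPeak (Fin.snoc g b) l ↔ (0 < l ∧ pathVal g l = pathVal g (l - 1) + 1 ∧ b = false) := by
  unfold IsPeak
  rw [pathVal_snoc g b (le_refl l), pathVal_snoc g b (by omega : l - 1 ≤ l), pathVal_snoc_top]
  constructor
  · rintro ⟨h1, _, h3, h4⟩
    refine ⟨h1, h3, ?_⟩
    cases b
    · rfl
    · exfalso; simp only [if_true] at h4; linarith
  · rintro ⟨h1, h3, h4⟩
    subst h4
    refine ⟨h1, by omega, h3, by simp only [Bool.false_eq_true, if_false]; ring⟩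

lemma numPeaks_snoc {l : ℕ} (g : Fin l → Bool) (b : Bool) :
    numPeaks (Fin.snoc g b)
      = numPeaks g + (if IsPeak (Fin.snoc g b) l then 1 else 0) := by
  unfold numPeaks
  rw [Finset.range_add_one, Finset.filter_insert]
  have hfilter : (Finset.range l).filter (fun i => IsPeak (Fin.snoc g b) i)
      = (Finset.range l).filter (fun i => IsPeak g i) := by
    apply Finset.filter_congr
    intro i hi
    simp only [Finset.mem_range] at hi
    simp [isPeak_snoc g b hi]
  split_ifs with h
  · rw [Finset.card_insert_of_notMem (fun hc => by
      simp only [Finset.mem_filter, Finset.mem_range] at hc; omega), hfilter]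
  · rw [hfilter, Nat.add_zero]

lemma card_filter_succ {l : ℕ} (P : (Fin (l + 1) → Bool) → Prop) [DecidablePred P] :
    (Finset.univ.filter P).card
      = (Finset.univ.filter (fun g : Fin l → Bool => P (Fin.snoc g true))).card
        + (Finset.univ.filter (fun g : Fin l → Bool => P (Fin.snoc g false))).card := by
  have key : ∀ b : Bool,
      (Finset.univ.filter (fun f : Fin (l+1) → Bool => P f ∧ f (Fin.last l) = b)).card
      = (Finset.univ.filter (fun g : Fin l → Bool => P (Fin.snoc g b))).card := by
    intro b
    refine Finset.card_bij' (fun f _ => Fin.init f) (fun g _ => Fin.snoc g b) ?_ ?_ ?_ ?_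
    · intro a ha
      simp only [Finset.mem_filter, Finset.mem_univ, true_and] at ha ⊢
      rw [show (Fin.snoc (Fin.init a) b : Fin (l+1) → Bool) = a from by
        rw [← ha.2]; exact Fin.snoc_init_self a]
      exact ha.1
    · intro a ha
      simp only [Finset.mem_filter, Finset.mem_univ, true_and] at ha ⊢
      exact ⟨ha, by simp⟩
    · intro a ha
      simp only [Finset.mem_filter, Finset.mem_univ, true_and] at ha
      show (Fin.snoc (Fin.init a) b : Fin (l+1) → Bool) = a
      rw [← ha.2]; exact Fin.snoc_init_self a
    · intro a ha
      simp
  have h2 := Finset.card_filter_add_card_filter_not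
      (s := (Finset.univ : Finset (Fin (l+1) → Bool)).filter P)
      (p := fun f => f (Fin.last l) = true)
  rw [Finset.filter_filter, Finset.filter_filter] at h2
  have h3 : (Finset.univ.filter fun (f : Fin (l+1) → Bool) => P f ∧ ¬ f (Fin.last l) = true)
      = Finset.univ.filter fun f => P f ∧ f (Fin.last l) = false := by
    apply Finset.filter_congr
    intro f _
    simp [Bool.not_eq_true]
  rw [h3] at h2
  rw [← h2, key true, key false]


lemma predD_snoc_false {l : ℕ} (hl : 1 ≤ l) (x y : ℤ) (hy : 0 ≤ y) (j : ℕ)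
    (g : Fin l → Bool) :
    (x + pathVal (Fin.snoc g false) (l+1) = y ∧ IsNonnegFrom x (Fin.snoc g false) ∧
      pathVal (Fin.snoc g false) 1 = 1 ∧
      pathVal (Fin.snoc g false) (l+1) - pathVal (Fin.snoc g false) (l+1-1) = -1 ∧
      numPeaks (Fin.snoc g false) = j)
    ↔ (x + pathVal g l = y + 1 ∧ IsNonnegFrom x g ∧ pathVal g 1 = 1 ∧
        numPeaks g + (if pathVal g l = pathVal g (l-1) + 1 then 1 else 0) = j) := by
  have etop : pathVal (Fin.snoc g false) (l+1) = pathVal g l - 1 := by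
    rw [pathVal_snoc_top]; simp only [Bool.false_eq_true, if_false]; ring
  have el : pathVal (Fin.snoc g false) (l+1-1) = pathVal g l := by
    rw [show l+1-1 = l from by omega]
    exact pathVal_snoc g false (le_refl l)
  have e1 : pathVal (Fin.snoc g false) 1 = pathVal g 1 := pathVal_snoc g false hl
  have epk : numPeaks (Fin.snoc g false)
      = numPeaks g + (if pathVal g l = pathVal g (l-1) + 1 then 1 else 0) := by
    rw [numPeaks_snoc]
    congr 1
    have hiff : IsPeak (Fin.snoc g false) l ↔ pathVal g l = pathVal g (l-1) + 1 := by
      rw [isPeak_snoc_top]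
      constructor
      · rintro ⟨_, h, _⟩; exact h
      · intro h; exact ⟨by omega, h, rfl⟩
    simp only [hiff]
  rw [etop, el, e1, epk, isNonnegFrom_snoc, etop]
  constructor
  · rintro ⟨h1, ⟨h2, _⟩, h3, _, h5⟩
    exact ⟨by linarith, h2, h3, h5⟩
  · rintro ⟨h1, h2, h3, h4⟩
    exact ⟨by linarith, ⟨h2, by linarith⟩, h3, by ring, h4⟩

lemma predU_snoc_true {l : ℕ} (hl : 1 ≤ l) (x y : ℤ) (hy : 1 ≤ y) (j : ℕ)
    (g : Fin l → Bool) :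
    (x + pathVal (Fin.snoc g true) (l+1) = y ∧ IsNonnegFrom x (Fin.snoc g true) ∧
      pathVal (Fin.snoc g true) 1 = 1 ∧
      pathVal (Fin.snoc g true) (l+1) - pathVal (Fin.snoc g true) (l+1-1) = 1 ∧
      numPeaks (Fin.snoc g true) = j)
    ↔ (x + pathVal g l = y - 1 ∧ IsNonnegFrom x g ∧ pathVal g 1 = 1 ∧
        numPeaks g = j) := by
  have etop : pathVal (Fin.snoc g true) (l+1) = pathVal g l + 1 := by
    rw [pathVal_snoc_top]; simp only [if_true]
  have el : pathVal (Fin.snoc g true) (l+1-1) = pathVal g l := by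
    rw [show l+1-1 = l from by omega]
    exact pathVal_snoc g true (le_refl l)
  have e1 : pathVal (Fin.snoc g true) 1 = pathVal g 1 := pathVal_snoc g true hl
  have epk : numPeaks (Fin.snoc g true) = numPeaks g := by
    rw [numPeaks_snoc]
    have hiff : ¬ IsPeak (Fin.snoc g true) l := by
      rw [isPeak_snoc_top]
      rintro ⟨_, _, h⟩
      simp at h
    rw [if_neg hiff, Nat.add_zero]
  rw [etop, el, e1, epk, isNonnegFrom_snoc, etop]
  constructor
  · rintro ⟨h1, ⟨h2, _⟩, h3, _, h5⟩
    exact ⟨by linarith, h2, h3, h5⟩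
  · rintro ⟨h1, h2, h3, h4⟩
    exact ⟨by linarith, ⟨h2, by linarith⟩, h3, by ring, h4⟩

lemma card_split_q {l : ℕ} (R : (Fin l → Bool) → Prop) [DecidablePred R]
    (q : (Fin l → Bool) → Prop) [DecidablePred q] :
    (Finset.univ.filter R).card
      = (Finset.univ.filter (fun g => R g ∧ q g)).card
        + (Finset.univ.filter (fun g => R g ∧ ¬ q g)).card := by
  have h2 := Finset.card_filter_add_card_filter_not
      (s := (Finset.univ : Finset (Fin l → Bool)).filter R) (p := q)
  rw [Finset.filter_filter, Finset.filter_filter] at h2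
  omega

lemma cntD_succ (l j : ℕ) (x y : ℤ) (hl : 1 ≤ l) (hy : 0 ≤ y) :
    cntD (l+1) (j+1) x y = cntU l j x (y+1) + cntD l (j+1) x (y+1) := by
  unfold cntD cntU
  rw [card_filter_succ]
  have hT : (Finset.univ.filter (fun g : Fin l → Bool =>
      x + pathVal (Fin.snoc g true) (l+1) = y ∧ IsNonnegFrom x (Fin.snoc g true) ∧
      pathVal (Fin.snoc g true) 1 = 1 ∧
      pathVal (Fin.snoc g true) (l+1) - pathVal (Fin.snoc g true) (l+1-1) = -1 ∧
      numPeaks (Fin.snoc g true) = j+1)).card = 0 := by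
    rw [Finset.card_eq_zero, Finset.filter_eq_empty_iff]
    intro g _
    rintro ⟨_, _, _, h4, _⟩
    rw [pathVal_snoc_top, show l+1-1 = l from by omega,
        pathVal_snoc g true (le_refl l)] at h4
    simp only [if_true] at h4
    linarith
  have hF : (Finset.univ.filter (fun g : Fin l → Bool =>
      x + pathVal (Fin.snoc g false) (l+1) = y ∧ IsNonnegFrom x (Fin.snoc g false) ∧
      pathVal (Fin.snoc g false) 1 = 1 ∧
      pathVal (Fin.snoc g false) (l+1) - pathVal (Fin.snoc g false) (l+1-1) = -1 ∧
      numPeaks (Fin.snoc g false) = j+1)).card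
      = cntU l j x (y+1) + cntD l (j+1) x (y+1) := by
    rw [Finset.filter_congr (fun g _ => predD_snoc_false hl x y hy (j+1) g)]
    rw [card_split_q _ (fun g => pathVal g l = pathVal g (l-1) + 1)]
    congr 1
    · unfold cntU
      apply congrArg
      apply Finset.filter_congr
      intro g _
      constructor
      · rintro ⟨⟨h1, h2, h3, h4⟩, hq⟩
        rw [if_pos hq] at h4
        exact ⟨h1, h2, h3, by linarith, by omega⟩
      · rintro ⟨h1, h2, h3, h4, h5⟩
        have hq : pathVal g l = pathVal g (l-1) + 1 := by linarith
        exact ⟨⟨h1, h2, h3, by rw [if_pos hq]; omega⟩, hq⟩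
    · unfold cntD
      apply congrArg
      apply Finset.filter_congr
      intro g _
      constructor
      · rintro ⟨⟨h1, h2, h3, h4⟩, hq⟩
        rcases step_dichotomy g hl with hs | hs
        · exact absurd hs hq
        · rw [if_neg hq] at h4
          exact ⟨h1, h2, h3, hs, by omega⟩
      · rintro ⟨h1, h2, h3, h4, h5⟩
        have hq : ¬ (pathVal g l = pathVal g (l-1) + 1) := by intro h; linarith
        exact ⟨⟨h1, h2, h3, by rw [if_neg hq]; omega⟩, hq⟩
  rw [hT, hF, Nat.zero_add]
  rfl

lemma cntD_succ_zero (l : ℕ) (x y : ℤ) (hl : 1 ≤ l) (hy : 0 ≤ y) :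
    cntD (l+1) 0 x y = cntD l 0 x (y+1) := by
  unfold cntD
  rw [card_filter_succ]
  have hT : (Finset.univ.filter (fun g : Fin l → Bool =>
      x + pathVal (Fin.snoc g true) (l+1) = y ∧ IsNonnegFrom x (Fin.snoc g true) ∧
      pathVal (Fin.snoc g true) 1 = 1 ∧
      pathVal (Fin.snoc g true) (l+1) - pathVal (Fin.snoc g true) (l+1-1) = -1 ∧
      numPeaks (Fin.snoc g true) = 0)).card = 0 := by
    rw [Finset.card_eq_zero, Finset.filter_eq_empty_iff]
    intro g _
    rintro ⟨_, _, _, h4, _⟩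
    rw [pathVal_snoc_top, show l+1-1 = l from by omega,
        pathVal_snoc g true (le_refl l)] at h4
    simp only [if_true] at h4
    linarith
  have hF : (Finset.univ.filter (fun g : Fin l → Bool =>
      x + pathVal (Fin.snoc g false) (l+1) = y ∧ IsNonnegFrom x (Fin.snoc g false) ∧
      pathVal (Fin.snoc g false) 1 = 1 ∧
      pathVal (Fin.snoc g false) (l+1) - pathVal (Fin.snoc g false) (l+1-1) = -1 ∧
      numPeaks (Fin.snoc g false) = 0)).card
      = (Finset.univ.filter (fun f : Fin l → Bool =>
          x + pathVal f l = y + 1 ∧ IsNonnegFrom x f ∧ pathVal f 1 = 1 ∧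
          pathVal f l - pathVal f (l-1) = -1 ∧ numPeaks f = 0)).card := by
    rw [Finset.filter_congr (fun g _ => predD_snoc_false hl x y hy 0 g)]
    apply congrArg
    apply Finset.filter_congr
    intro g _
    constructor
    · rintro ⟨h1, h2, h3, h4⟩
      rcases step_dichotomy g hl with hs | hs
      · rw [if_pos hs] at h4; omega
      · have hq : ¬ (pathVal g l = pathVal g (l-1) + 1) := by intro h; linarith
        rw [if_neg hq] at h4
        exact ⟨h1, h2, h3, hs, by omega⟩
    · rintro ⟨h1, h2, h3, h4, h5⟩
      have hq : ¬ (pathVal g l = pathVal g (l-1) + 1) := by intro h; linarith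
      exact ⟨h1, h2, h3, by rw [if_neg hq]; omega⟩
  rw [hT, hF, Nat.zero_add]

lemma cntU_succ (l j : ℕ) (x y : ℤ) (hl : 1 ≤ l) (hy : 1 ≤ y) :
    cntU (l+1) j x y = cntU l j x (y-1) + cntD l j x (y-1) := by
  unfold cntU
  rw [card_filter_succ]
  have hF : (Finset.univ.filter (fun g : Fin l → Bool =>
      x + pathVal (Fin.snoc g false) (l+1) = y ∧ IsNonnegFrom x (Fin.snoc g false) ∧
      pathVal (Fin.snoc g false) 1 = 1 ∧
      pathVal (Fin.snoc g false) (l+1) - pathVal (Fin.snoc g false) (l+1-1) = 1 ∧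
      numPeaks (Fin.snoc g false) = j)).card = 0 := by
    rw [Finset.card_eq_zero, Finset.filter_eq_empty_iff]
    intro g _
    rintro ⟨_, _, _, h4, _⟩
    rw [pathVal_snoc_top, show l+1-1 = l from by omega,
        pathVal_snoc g false (le_refl l)] at h4
    simp only [Bool.false_eq_true, if_false] at h4
    linarith
  have hT : (Finset.univ.filter (fun g : Fin l → Bool =>
      x + pathVal (Fin.snoc g true) (l+1) = y ∧ IsNonnegFrom x (Fin.snoc g true) ∧
      pathVal (Fin.snoc g true) 1 = 1 ∧
      pathVal (Fin.snoc g true) (l+1) - pathVal (Fin.snoc g true) (l+1-1) = 1 ∧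
      numPeaks (Fin.snoc g true) = j)).card
      = cntU l j x (y-1) + cntD l j x (y-1) := by
    rw [Finset.filter_congr (fun g _ => predU_snoc_true hl x y hy j g)]
    rw [card_split_q _ (fun g => pathVal g l = pathVal g (l-1) + 1)]
    congr 1
    · unfold cntU
      apply congrArg
      apply Finset.filter_congr
      intro g _
      constructor
      · rintro ⟨⟨h1, h2, h3, h4⟩, hq⟩
        exact ⟨h1, h2, h3, by linarith, h4⟩
      · rintro ⟨h1, h2, h3, h4, h5⟩
        exact ⟨⟨h1, h2, h3, h5⟩, by linarith⟩
    · unfold cntD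
      apply congrArg
      apply Finset.filter_congr
      intro g _
      constructor
      · rintro ⟨⟨h1, h2, h3, h4⟩, hq⟩
        rcases step_dichotomy g hl with hs | hs
        · exact absurd hs hq
        · exact ⟨h1, h2, h3, hs, h4⟩
      · rintro ⟨h1, h2, h3, h4, h5⟩
        exact ⟨⟨h1, h2, h3, h5⟩, by intro h; linarith⟩
  rw [hT, hF, Nat.add_zero]
  rfl


lemma pathVal_len0 {f : Fin 0 → Bool} (i : ℕ) : pathVal f i = 0 := by
  unfold pathVal
  refine Finset.sum_eq_zero (fun k _ => ?_)
  rw [dif_neg (by omega)]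

lemma cntU_len0 (j : ℕ) (x y : ℤ) : cntU 0 j x y = 0 := by
  unfold cntU
  rw [Finset.card_eq_zero, Finset.filter_eq_empty_iff]
  rintro f _ ⟨_, _, h3, _, _⟩
  rw [pathVal_len0] at h3
  norm_num at h3

lemma cntD_len0 (j : ℕ) (x y : ℤ) : cntD 0 j x y = 0 := by
  unfold cntD
  rw [Finset.card_eq_zero, Finset.filter_eq_empty_iff]
  rintro f _ ⟨_, _, h3, _, _⟩
  rw [pathVal_len0] at h3
  norm_num at h3

lemma cntD_one (j : ℕ) (x y : ℤ) : cntD 1 j x y = 0 := by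
  unfold cntD
  rw [Finset.card_eq_zero, Finset.filter_eq_empty_iff]
  rintro f _ ⟨_, _, h3, h4, _⟩
  rw [show (1:ℕ) - 1 = 0 from rfl, pathVal_zero, h3] at h4
  norm_num at h4

lemma pathVal_one_val (f : Fin 1 → Bool) : pathVal f 1 = if f 0 then 1 else -1 := by
  unfold pathVal
  rw [Finset.sum_range_one, dif_pos (by omega : 0 < 1)]
  rfl

lemma numPeaks_one (f : Fin 1 → Bool) : numPeaks f = 0 := by
  unfold numPeaks
  rw [Finset.card_eq_zero, Finset.filter_eq_empty_iff]
  intro i hi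
  simp only [Finset.mem_range] at hi
  rintro ⟨h1, h2, _⟩
  omega

lemma cntU_one (x y : ℤ) (hx : 0 ≤ x) (j : ℕ) :
    cntU 1 j x y = if j = 0 ∧ y = x + 1 then 1 else 0 := by
  unfold cntU
  by_cases hc : j = 0 ∧ y = x + 1
  · rw [if_pos hc]
    rw [Finset.card_eq_one]
    refine ⟨fun _ => true, ?_⟩
    rw [Finset.eq_singleton_iff_unique_mem]
    constructor
    · simp only [Finset.mem_filter, Finset.mem_univ, true_and]
      have hv : pathVal (fun _ : Fin 1 => true) 1 = 1 := by
        rw [pathVal_one_val]; norm_num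
      refine ⟨?_, ?_, hv, ?_, ?_⟩
      · rw [hv]; omega
      · intro i hi
        simp only [Finset.mem_range] at hi
        rcases Nat.eq_zero_or_pos i with rfl | hpos
        · rw [pathVal_zero]; omega
        · rw [pathVal_stable _ (by omega : 1 ≤ i), hv]; omega
      · rw [show (1:ℕ) - 1 = 0 from rfl, pathVal_zero, hv]; norm_num
      · rw [numPeaks_one]; omega
    · intro f hf
      simp only [Finset.mem_filter, Finset.mem_univ, true_and] at hf
      obtain ⟨_, _, h3, _, _⟩ := hf
      rw [pathVal_one_val] at h3
      funext i
      rw [Subsingleton.elim i 0]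
      rcases hb : f 0 with _ | _
      · rw [hb] at h3; norm_num at h3
      · rfl
  · rw [if_neg hc]
    rw [Finset.card_eq_zero, Finset.filter_eq_empty_iff]
    rintro f _ ⟨h1, _, h3, _, h5⟩
    rw [h3] at h1
    rw [numPeaks_one] at h5
    exact hc ⟨h5.symm, by linarith⟩

lemma cntU_y0 (l j : ℕ) (x : ℤ) : cntU (l+1) j x 0 = 0 := by
  unfold cntU
  rw [Finset.card_eq_zero, Finset.filter_eq_empty_iff]
  rintro f _ ⟨h1, h2, _, h4, _⟩
  have h6 := h2 l (by simp only [Finset.mem_range]; omega)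
  rw [show l+1-1 = l from by omega] at h4
  linarith


lemma main (l : ℕ) : ∀ (j : ℕ) (x y : ℤ), 0 ≤ x → 0 ≤ y →
    ((cntU l j x y : ℤ)
        = G l j ((j:ℤ) - 1) x y - G l ((j:ℤ) - 1) j (-x) y
          + (if (j:ℤ) = 0 ∧ y = x + (l:ℤ) ∧ 1 ≤ (l:ℤ) then 1 else 0))
    ∧ ((cntD l j x y : ℤ)
        = G l ((j:ℤ) - 1) ((j:ℤ) - 1) x y - G l ((j:ℤ) - 2) (j:ℤ) (-x) y) := by
  induction l with
  | zero =>
    intro j x y hx hy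
    constructor
    · rw [cntU_len0,
        G_zero_of_le_one (show (((0:ℕ)):ℤ) ≤ 1 by norm_num),
        G_zero_of_le_one (show (((0:ℕ)):ℤ) ≤ 1 by norm_num),
        if_neg (by norm_num)]
      norm_num
    · rw [cntD_len0,
        G_zero_of_le_one (show (((0:ℕ)):ℤ) ≤ 1 by norm_num),
        G_zero_of_le_one (show (((0:ℕ)):ℤ) ≤ 1 by norm_num)]
      norm_num
  | succ l ih =>
    intro j x y hx hy
    rcases Nat.eq_zero_or_pos l with rfl | hl1
    · -- length 1
      constructor
      · rw [cntU_one x y hx j,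
          G_zero_of_le_one (show (((0+1:ℕ)):ℤ) ≤ 1 by norm_num),
          G_zero_of_le_one (show (((0+1:ℕ)):ℤ) ≤ 1 by norm_num)]
        push_cast
        split_ifs <;> (try simp_all) <;> omega
      · rw [cntD_one,
          G_zero_of_le_one (show (((0+1:ℕ)):ℤ) ≤ 1 by norm_num),
          G_zero_of_le_one (show (((0+1:ℕ)):ℤ) ≤ 1 by norm_num)]
        norm_num
    · constructor
      · -- U part
        rcases hy.eq_or_lt with heq | hy1
        · -- y = 0
          obtain rfl : y = 0 := heq.symm
          rw [cntU_y0, if_neg (show ¬((j:ℤ) = 0 ∧ (0:ℤ) = x + ((l+1:ℕ):ℤ) ∧ 1 ≤ ((l+1:ℕ):ℤ)) by push_cast; omega)]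
          have h1 := Gy0 ((l+1 : ℕ) : ℤ) (j:ℤ) x
          push_cast at h1 ⊢
          linarith
        · -- 1 ≤ y
          have hy1' : (1:ℤ) ≤ y := hy1
          rw [cntU_succ l j x y hl1 hy1']
          rcases j with _ | k
          · obtain ⟨ihU, ihD⟩ := ih 0 x (y-1) hx (by omega)
            simp only [Nat.cast_zero] at ihU ihD ⊢
            have z1 : G ((l:ℕ):ℤ) 0 (0-1) x (y-1) = 0 := G_neg₂ (by norm_num) _ _ _ _
            have z2 : G ((l:ℕ):ℤ) (0-1) 0 (-x) (y-1) = 0 := G_neg₁ (by norm_num) _ _ _ _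
            have z3 : G ((l:ℕ):ℤ) (0-1) (0-1) x (y-1) = 0 := G_neg₁ (by norm_num) _ _ _ _
            have z4 : G ((l:ℕ):ℤ) (0-2) 0 (-x) (y-1) = 0 := G_neg₁ (by norm_num) _ _ _ _
            have z5 : G (((l+1:ℕ)):ℤ) 0 (0-1) x y = 0 := G_neg₂ (by norm_num) _ _ _ _
            have z6 : G (((l+1:ℕ)):ℤ) (0-1) 0 (-x) y = 0 := G_neg₁ (by norm_num) _ _ _ _
            rw [z1, z2] at ihU
            rw [z3, z4] at ihD
            rw [z5, z6]
            push_cast at ihU ihD ⊢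
            simp only [true_and] at ihU ⊢
            split_ifs at ihU ⊢ <;> omega
          · obtain ⟨ihU, ihD⟩ := ih (k+1) x (y-1) hx (by omega)
            have key := IU ((l:ℕ):ℤ) ((k:ℤ)+1) x y (by omega) (by omega) hx hy1'
            push_cast at ihU ihD ⊢
            rw [if_neg (show ¬((k:ℤ)+1 = 0 ∧ y - 1 = x + (l:ℤ) ∧ 1 ≤ (l:ℤ)) by omega)] at ihU
            rw [if_neg (show ¬((k:ℤ)+1 = 0 ∧ y = x + ((l:ℤ)+1) ∧ 1 ≤ (l:ℤ)+1) by omega)]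
            linarith
      · -- D part
        rcases j with _ | k
        · rw [cntD_succ_zero l x y hl1 hy]
          have ihD := (ih 0 x (y+1) hx (by omega)).2
          simp only [Nat.cast_zero] at ihD ⊢
          have z1 : G ((l:ℕ):ℤ) (0-1) (0-1) x (y+1) = 0 := G_neg₁ (by norm_num) _ _ _ _
          have z2 : G ((l:ℕ):ℤ) (0-2) 0 (-x) (y+1) = 0 := G_neg₁ (by norm_num) _ _ _ _
          have z3 : G (((l+1:ℕ)):ℤ) (0-1) (0-1) x y = 0 := G_neg₁ (by norm_num) _ _ _ _
          have z4 : G (((l+1:ℕ)):ℤ) (0-2) 0 (-x) y = 0 := G_neg₁ (by norm_num) _ _ _ _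
          rw [z1, z2] at ihD
          rw [z3, z4]
          push_cast at ihD ⊢
          omega
        · rw [cntD_succ l k x y hl1 hy]
          have ihU := (ih k x (y+1) hx (by omega)).1
          have ihD := (ih (k+1) x (y+1) hx (by omega)).2
          have key := ID ((l:ℕ):ℤ) ((k:ℕ):ℤ) x y (by omega)
          push_cast at ihU ihD ⊢
          rw [show ((k:ℤ)+1-1) = (k:ℤ) from by ring,
              show ((k:ℤ)+1-2) = (k:ℤ)-1 from by ring] at ihD ⊢
          linarith

end Aux

/-- For `x ≥ 0`, `y ≥ 1`, the number of nonnegative Bernoulli paths of length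
`l` from `x` to `y` with exactly `j` peaks, starting with an up step and
ending with a down step, equals `G(l,j-1,j-1,x,y) - G(l,j-2,j,-x,y)`. -/
theorem card_nonneg_paths_ud (l j : ℕ) (x y : ℤ) (hx : 0 ≤ x) (hy : 1 ≤ y) :
    (((Finset.univ : Finset (Fin l → Bool)).filter
        (fun f => x + pathVal f l = y ∧ IsNonnegFrom x f ∧
          pathVal f 1 = 1 ∧ pathVal f l - pathVal f (l - 1) = -1 ∧
          numPeaks f = j)).card : ℤ)
      = G l ((j : ℤ) - 1) ((j : ℤ) - 1) x y - G l ((j : ℤ) - 2) j (-x) y := by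
  exact (Aux.main l j x y hx (by omega)).2
end

section
/- For positive integers a, b, c, k: sum over y≥c of [binomial(a+y,k)·binomial(b-y,k-1) - binomial(a+y,k-1)·binomial(b-y,k)] equals binomial(a+c,k)·binomial(b-c+1,k). -/
lemma ichoose_pascal (m k : ℤ) (hm : 0 ≤ m) (hk : 0 < k) :
    ichoose (m + 1) k = ichoose m k + ichoose m (k - 1) := by
  unfold ichoose
  have h1 : 0 ≤ m + 1 := by omega
  have h2 : 0 ≤ k := le_of_lt hk
  have h3 : 0 ≤ k - 1 := by omega
  simp only [hm, hk.le, h1, h3, and_true, if_pos, true_and, if_true]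
  have e1 : (m + 1).toNat = m.toNat + 1 := by omega
  have e2 : k.toNat = (k - 1).toNat + 1 := by omega
  rw [e1, e2, Nat.choose_succ_succ]
  push_cast
  ring

lemma ichoose_zero_pos (k : ℤ) (hk : 0 < k) : ichoose 0 k = 0 := by
  unfold ichoose
  simp only [le_refl, hk.le, and_true, if_pos, true_and, if_true, Int.toNat_zero]
  rw [Nat.choose_eq_zero_of_lt (by omega)]
  simp

lemma ichoose_neg (m k : ℤ) (hm : m < 0) : ichoose m k = 0 := by
  unfold ichoose
  simp [not_le.mpr hm]

lemma Icc_int_succ (c b : ℤ) (h : c ≤ b + 1) :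
    Finset.Icc c (b + 1) = insert (b + 1) (Finset.Icc c b) := by
  ext x
  simp only [Finset.mem_Icc, Finset.mem_insert]
  omega

/-- For positive integers `a, b, c, k`,
`∑_{y ≥ c} [C(a+y,k)·C(b-y,k-1) - C(a+y,k-1)·C(b-y,k)] = C(a+c,k)·C(b-c+1,k)`.
All summands with `y > b` vanish, so the sum over `y ≥ c` equals the sum over
`c ≤ y ≤ b`. -/
theorem binomial_telescoping_sum (a b c k : ℤ)
    (ha : 0 < a) (hb : 0 < b) (hc : 0 < c) (hk : 0 < k) :
    ∑ y ∈ Finset.Icc c b,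
        (ichoose (a + y) k * ichoose (b - y) (k - 1)
          - ichoose (a + y) (k - 1) * ichoose (b - y) k)
      = ichoose (a + c) k * ichoose (b - c + 1) k := by
  set f : ℤ → ℤ := fun y => ichoose (a + y) k * ichoose (b - y + 1) k with hf
  -- summand is a telescope
  have key : ∀ y, c ≤ y → y ≤ b →
      ichoose (a + y) k * ichoose (b - y) (k - 1)
        - ichoose (a + y) (k - 1) * ichoose (b - y) k = f y - f (y + 1) := by
    intro y hcy hyb
    have hay : 0 ≤ a + y := by omega
    have hby : 0 ≤ b - y := by omega
    have p1 : ichoose (b - y + 1) k = ichoose (b - y) k + ichoose (b - y) (k - 1) :=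
      ichoose_pascal _ _ hby hk
    have p2 : ichoose (a + y + 1) k = ichoose (a + y) k + ichoose (a + y) (k - 1) :=
      ichoose_pascal _ _ hay hk
    simp only [hf]
    have e1 : a + (y + 1) = a + y + 1 := by ring
    have e2 : b - (y + 1) + 1 = b - y := by ring
    rw [e1, e2, p1, p2]
    ring
  -- case split
  rcases le_or_gt c b with hcb | hbc
  · -- telescoping sum
    have tel : ∀ n, c ≤ n → (∑ y ∈ Finset.Icc c n, (f y - f (y + 1))) = f c - f (n + 1) := by
      intro n
      refine Int.le_induction
        (motive := fun n _ => (∑ y ∈ Finset.Icc c n, (f y - f (y + 1))) = f c - f (n + 1))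
        ?_ (fun n hn ih => ?_) n
      · show (∑ y ∈ Finset.Icc c c, (f y - f (y + 1))) = f c - f (c + 1)
        rw [Finset.Icc_self, Finset.sum_singleton]
      · show (∑ y ∈ Finset.Icc c (n + 1), (f y - f (y + 1))) = f c - f (n + 1 + 1)
        have hni : c ≤ n + 1 := by omega
        rw [Icc_int_succ c n hni, Finset.sum_insert (by simp), ih]
        ring
    have hsum : ∑ y ∈ Finset.Icc c b,
        (ichoose (a + y) k * ichoose (b - y) (k - 1)
          - ichoose (a + y) (k - 1) * ichoose (b - y) k)
        = ∑ y ∈ Finset.Icc c b, (f y - f (y + 1)) :=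
      Finset.sum_congr rfl fun y hy =>
        key y (Finset.mem_Icc.mp hy).1 (Finset.mem_Icc.mp hy).2
    rw [hsum, tel b hcb]
    have : f (b + 1) = 0 := by
      simp only [hf]
      have : b - (b + 1) + 1 = 0 := by ring
      rw [this, ichoose_zero_pos k hk, mul_zero]
    rw [this, sub_zero]
  · -- empty sum, RHS vanishes
    rw [Finset.Icc_eq_empty (by omega), Finset.sum_empty]
    rcases lt_or_eq_of_le (by omega : b - c + 1 ≤ 0) with h | h
    · rw [ichoose_neg _ _ h, mul_zero]
    · rw [h, ichoose_zero_pos k hk, mul_zero]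
end

section
/- The number of nonnegative Bernoulli excursion-type paths of length l from 0 to y≥1 with exactly j peaks starting and ending with an up step equals binomial((l+y)/2-1, j-1)·binomial((l-y)/2-1, j-1)·(y/j). -/
/-- The path stays nonnegative on `[0, n]`. -/
def IsNonneg {n : ℕ} (f : Fin n → Bool) : Prop :=
  ∀ i ∈ Finset.range (n + 1), 0 ≤ pathVal f i

instance {n : ℕ} (f : Fin n → Bool) : Decidable (IsNonneg f) := by
  unfold IsNonneg; infer_instance

set_option maxHeartbeats 1000000

/-! helper step function -/

def stepVal {n : ℕ} (f : Fin n → Bool) (i : ℕ) : ℤ :=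
  if h : i < n then (if f ⟨i, h⟩ then (1 : ℤ) else -1) else 0

lemma pathVal_eq_sum {n : ℕ} (f : Fin n → Bool) (i : ℕ) :
    pathVal f i = ∑ j ∈ Finset.range i, stepVal f j := rfl

lemma pathVal_succ {n : ℕ} (f : Fin n → Bool) (i : ℕ) :
    pathVal f (i + 1) = pathVal f i + stepVal f i := by
  simp [pathVal_eq_sum, Finset.sum_range_succ]

lemma stepVal_snoc_lt {n : ℕ} (f : Fin n → Bool) (b : Bool) {i : ℕ} (h : i < n) :
    stepVal (Fin.snoc f b) i = stepVal f i := by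
  have h' : i < n + 1 := by omega
  rw [stepVal, stepVal, dif_pos h', dif_pos h]
  have h2 : (⟨i, h'⟩ : Fin (n+1)) = Fin.castSucc ⟨i, h⟩ := rfl
  rw [h2, Fin.snoc_castSucc]

lemma stepVal_snoc_last {n : ℕ} (f : Fin n → Bool) (b : Bool) :
    stepVal (Fin.snoc f b) n = if b then 1 else -1 := by
  have h' : n < n + 1 := by omega
  rw [stepVal, dif_pos h']
  have h2 : (⟨n, h'⟩ : Fin (n+1)) = Fin.last n := rfl
  rw [h2, Fin.snoc_last]

lemma pathVal_snoc {n : ℕ} (f : Fin n → Bool) (b : Bool) {i : ℕ} (h : i ≤ n) :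
    pathVal (Fin.snoc f b) i = pathVal f i := by
  rw [pathVal_eq_sum, pathVal_eq_sum]
  refine Finset.sum_congr rfl (fun j hj => ?_)
  exact stepVal_snoc_lt f b (by simp at hj; omega)

lemma pathVal_snoc_top {n : ℕ} (f : Fin n → Bool) (b : Bool) :
    pathVal (Fin.snoc f b) (n + 1) = pathVal f n + (if b then 1 else -1) := by
  rw [pathVal_succ, pathVal_snoc f b (le_refl n), stepVal_snoc_last]

lemma isPeak_iff {n : ℕ} (f : Fin n → Bool) (x : ℕ) :
    IsPeak f x ↔ 0 < x ∧ x < n ∧ stepVal f (x - 1) = 1 ∧ stepVal f x = -1 := by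
  unfold IsPeak
  constructor
  · rintro ⟨h1, h2, h3, h4⟩
    have hx : (x - 1) + 1 = x := by omega
    have e1 := pathVal_succ f (x - 1)
    rw [hx] at e1
    have e2 := pathVal_succ f x
    exact ⟨h1, h2, by omega, by omega⟩
  · rintro ⟨h1, h2, h3, h4⟩
    have hx : (x - 1) + 1 = x := by omega
    have e1 := pathVal_succ f (x - 1)
    rw [hx] at e1
    have e2 := pathVal_succ f x
    exact ⟨h1, h2, by omega, by omega⟩
lemma isPeak_snoc_lt {n : ℕ} (f : Fin n → Bool) (b : Bool) {x : ℕ} (hx : x < n) :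
    IsPeak (Fin.snoc f b) x ↔ IsPeak f x := by
  rw [isPeak_iff, isPeak_iff]
  constructor
  · rintro ⟨h1, _, h3, h4⟩
    rw [stepVal_snoc_lt f b (show x - 1 < n by omega)] at h3
    rw [stepVal_snoc_lt f b hx] at h4
    exact ⟨h1, hx, h3, h4⟩
  · rintro ⟨h1, _, h3, h4⟩
    rw [← stepVal_snoc_lt f b (show x - 1 < n by omega)] at h3
    rw [← stepVal_snoc_lt f b hx] at h4
    exact ⟨h1, by omega, h3, h4⟩

lemma isPeak_snoc_last {n : ℕ} (f : Fin n → Bool) (b : Bool) :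
    IsPeak (Fin.snoc f b) n ↔ (0 < n ∧ stepVal f (n-1) = 1 ∧ b = false) := by
  rw [isPeak_iff]
  constructor
  · rintro ⟨h1, _, h3, h4⟩
    rw [stepVal_snoc_lt f b (show n - 1 < n by omega)] at h3
    rw [stepVal_snoc_last] at h4
    refine ⟨h1, h3, ?_⟩
    cases b
    · rfl
    · simp at h4
  · rintro ⟨h1, h3, h4⟩
    subst h4
    rw [← stepVal_snoc_lt f false (show n - 1 < n by omega)] at h3
    exact ⟨h1, by omega, h3, by rw [stepVal_snoc_last]; rfl⟩

lemma numPeaks_snoc {n : ℕ} (f : Fin n → Bool) (b : Bool) :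
    numPeaks (Fin.snoc f b) =
      numPeaks f + (if 0 < n ∧ stepVal f (n-1) = 1 ∧ b = false then 1 else 0) := by
  unfold numPeaks
  rw [Finset.range_add_one, Finset.filter_insert]
  have hcongr : Finset.filter (fun x => IsPeak (Fin.snoc f b) x) (Finset.range n)
      = Finset.filter (fun x => IsPeak f x) (Finset.range n) := by
    refine Finset.filter_congr (fun x hx => ?_)
    exact isPeak_snoc_lt f b (Finset.mem_range.mp hx)
  by_cases hP : IsPeak (Fin.snoc f b) n
  · rw [if_pos hP, if_pos ((isPeak_snoc_last f b).mp hP), hcongr]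
    rw [Finset.card_insert_of_notMem (by simp)]
  · rw [if_neg hP, if_neg (fun h => hP ((isPeak_snoc_last f b).mpr h)), hcongr]
    omega

lemma isNonneg_snoc {n : ℕ} (f : Fin n → Bool) (b : Bool) :
    IsNonneg (Fin.snoc f b) ↔ IsNonneg f ∧ 0 ≤ pathVal (Fin.snoc f b) (n+1) := by
  unfold IsNonneg
  constructor
  · intro h
    refine ⟨fun i hi => ?_, h (n+1) (by simp)⟩
    have hi' : i ≤ n := by simp at hi; omega
    rw [← pathVal_snoc f b hi']
    exact h i (by simp; omega)
  · rintro ⟨h1, h2⟩ i hi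
    have hi' : i ≤ n + 1 := by simp at hi; omega
    rcases Nat.lt_or_ge i (n+1) with hlt | hge
    · rw [pathVal_snoc f b (by omega)]
      exact h1 i (by simp; omega)
    · have : i = n + 1 := by omega
      rw [this]; exact h2

lemma snoc_injective {n : ℕ} (b : Bool) :
    Function.Injective (fun f : Fin n → Bool => (Fin.snoc f b : Fin (n+1) → Bool)) := by
  intro f g h
  have := congrArg Fin.init h
  simpa [Fin.init_snoc] using this

lemma card_filter_snoc_split {n : ℕ} (P : (Fin (n+1) → Bool) → Prop) [DecidablePred P] :
    (Finset.univ.filter P).card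
      = (Finset.univ.filter (fun f : Fin n → Bool => P (Fin.snoc f true))).card
      + (Finset.univ.filter (fun f : Fin n → Bool => P (Fin.snoc f false))).card := by
  classical
  have hset : (Finset.univ.filter P)
      = ((Finset.univ.filter (fun f : Fin n → Bool => P (Fin.snoc f true))).image
          (fun f => Fin.snoc f true))
        ∪ ((Finset.univ.filter (fun f : Fin n → Bool => P (Fin.snoc f false))).image
          (fun f => Fin.snoc f false)) := by
    ext g
    simp only [Finset.mem_filter, Finset.mem_univ, true_and, Finset.mem_union,
      Finset.mem_image]
    constructor
    · intro hg
      rcases hb : g (Fin.last n) with _ | _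
      · right
        exact ⟨Fin.init g, by rw [show Fin.snoc (Fin.init g) false = g by
            rw [← hb]; exact Fin.snoc_init_self g]; exact ⟨hg, rfl⟩⟩
      · left
        exact ⟨Fin.init g, by rw [show Fin.snoc (Fin.init g) true = g by
            rw [← hb]; exact Fin.snoc_init_self g]; exact ⟨hg, rfl⟩⟩
    · rintro (⟨f, hf, rfl⟩ | ⟨f, hf, rfl⟩) <;> exact hf
  rw [hset, Finset.card_union_of_disjoint, Finset.card_image_of_injective _ (snoc_injective true),
    Finset.card_image_of_injective _ (snoc_injective false)]
  · rw [Finset.disjoint_left]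
    rintro g hg1 hg2
    simp only [Finset.mem_image] at hg1 hg2
    obtain ⟨f1, _, h1⟩ := hg1
    obtain ⟨f2, _, h2⟩ := hg2
    have e1 : g (Fin.last n) = true := by rw [← h1]; simp
    have e2 : g (Fin.last n) = false := by rw [← h2]; simp
    rw [e1] at e2; exact Bool.noConfusion e2
def Nup (l : ℕ) (y : ℤ) (j : ℕ) : ℕ :=
  ((Finset.univ : Finset (Fin l → Bool)).filter
    (fun f => pathVal f l = y ∧ IsNonneg f ∧ pathVal f 1 = 1 ∧
      pathVal f l - pathVal f (l - 1) = 1 ∧ numPeaks f = j)).card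

def Ndown (l : ℕ) (y : ℤ) (j : ℕ) : ℕ :=
  ((Finset.univ : Finset (Fin l → Bool)).filter
    (fun f => pathVal f l = y ∧ IsNonneg f ∧ pathVal f 1 = 1 ∧
      pathVal f l - pathVal f (l - 1) = -1 ∧ numPeaks f = j)).card

lemma stepVal_eq_diff {n : ℕ} (f : Fin n → Bool) (i : ℕ) :
    stepVal f i = pathVal f (i+1) - pathVal f i := by
  rw [pathVal_succ]; ring

lemma stepVal_pm {n : ℕ} (f : Fin n → Bool) {i : ℕ} (h : i < n) :
    stepVal f i = 1 ∨ stepVal f i = -1 := by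
  rw [stepVal, dif_pos h]
  by_cases hf : f ⟨i, h⟩ <;> simp [hf]

lemma isNonneg_nonneg {n : ℕ} {f : Fin n → Bool} (h : IsNonneg f) {i : ℕ} (hi : i ≤ n) :
    0 ≤ pathVal f i := h i (by simp; omega)

/-- R1 : remove a final up-step. -/
lemma rec_up (n : ℕ) (hn : 1 ≤ n) (y : ℤ) (j : ℕ) :
    Nup (n+1) y j = Nup n (y-1) j + Ndown n (y-1) j := by
  classical
  rw [Nup, card_filter_snoc_split]
  have hfalse : (Finset.univ.filter (fun f : Fin n → Bool =>
      pathVal (Fin.snoc f false) (n+1) = y ∧ IsNonneg (Fin.snoc f false) ∧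
      pathVal (Fin.snoc f false) 1 = 1 ∧
      pathVal (Fin.snoc f false) (n+1) - pathVal (Fin.snoc f false) (n+1-1) = 1 ∧
      numPeaks (Fin.snoc f false) = j)).card = 0 := by
    rw [Finset.card_eq_zero, Finset.filter_eq_empty_iff]
    rintro f - ⟨-, -, -, h4, -⟩
    rw [show n+1-1 = n from rfl, pathVal_snoc_top, pathVal_snoc f false (le_refl n)] at h4
    simp at h4
  rw [hfalse, add_zero]
  have htrue : (Finset.univ.filter (fun f : Fin n → Bool =>
      pathVal (Fin.snoc f true) (n+1) = y ∧ IsNonneg (Fin.snoc f true) ∧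
      pathVal (Fin.snoc f true) 1 = 1 ∧
      pathVal (Fin.snoc f true) (n+1) - pathVal (Fin.snoc f true) (n+1-1) = 1 ∧
      numPeaks (Fin.snoc f true) = j)).card
      = (Finset.univ.filter (fun f : Fin n → Bool =>
          pathVal f n = y - 1 ∧ IsNonneg f ∧ pathVal f 1 = 1 ∧ numPeaks f = j)).card := by
    congr 1
    refine Finset.filter_congr (fun f _ => ?_)
    rw [show n+1-1 = n from rfl, pathVal_snoc_top, pathVal_snoc f true (le_refl n),
      pathVal_snoc f true hn, isNonneg_snoc, pathVal_snoc_top,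
      numPeaks_snoc]
    simp only [if_true]
    constructor
    · rintro ⟨h1, ⟨h2a, _⟩, h3, -, h5⟩
      refine ⟨by omega, h2a, h3, by simpa using h5⟩
    · rintro ⟨h1, h2, h3, h5⟩
      refine ⟨by omega, ⟨h2, by have := isNonneg_nonneg h2 (le_refl n); omega⟩, h3,
        by ring, by simpa using h5⟩
  rw [htrue]
  -- now split by penultimate step
  rw [Nup, Ndown]
  rw [← Finset.card_filter_add_card_filter_not
    (s := Finset.univ.filter (fun f : Fin n → Bool =>
      pathVal f n = y - 1 ∧ IsNonneg f ∧ pathVal f 1 = 1 ∧ numPeaks f = j))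
    (p := fun f => pathVal f n - pathVal f (n - 1) = 1)]
  congr 1
  · rw [Finset.filter_filter]
    congr 1
    ext f
    simp only [Finset.mem_filter, Finset.mem_univ, true_and]
    constructor
    · rintro ⟨⟨a, b, c, d⟩, e⟩; exact ⟨a, b, c, e, d⟩
    · rintro ⟨a, b, c, e, d⟩; exact ⟨⟨a, b, c, d⟩, e⟩
  · rw [Finset.filter_filter]
    congr 1
    ext f
    simp only [Finset.mem_filter, Finset.mem_univ, true_and]
    have hstep : pathVal f n - pathVal f (n-1) = stepVal f (n-1) := by
      rw [stepVal_eq_diff, show n-1+1 = n by omega]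
    have hpm := stepVal_pm f (show n-1 < n by omega)
    constructor
    · rintro ⟨⟨a, b, c, d⟩, e⟩
      exact ⟨a, b, c, by omega, d⟩
    · rintro ⟨a, b, c, e, d⟩
      exact ⟨⟨a, b, c, d⟩, by omega⟩

/-- R2 : remove a final down-step. -/
lemma rec_down (n : ℕ) (hn : 1 ≤ n) (y : ℤ) (hy : 0 ≤ y) (j : ℕ) :
    Ndown (n+1) y (j+1) = Nup n (y+1) j + Ndown n (y+1) (j+1) := by
  classical
  rw [Ndown, card_filter_snoc_split]
  have htrue : (Finset.univ.filter (fun f : Fin n → Bool =>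
      pathVal (Fin.snoc f true) (n+1) = y ∧ IsNonneg (Fin.snoc f true) ∧
      pathVal (Fin.snoc f true) 1 = 1 ∧
      pathVal (Fin.snoc f true) (n+1) - pathVal (Fin.snoc f true) (n+1-1) = -1 ∧
      numPeaks (Fin.snoc f true) = j+1)).card = 0 := by
    rw [Finset.card_eq_zero, Finset.filter_eq_empty_iff]
    rintro f - ⟨-, -, -, h4, -⟩
    rw [show n+1-1 = n from rfl, pathVal_snoc_top, pathVal_snoc f true (le_refl n)] at h4
    simp at h4
  rw [htrue, zero_add]
  have hfalse : (Finset.univ.filter (fun f : Fin n → Bool =>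
      pathVal (Fin.snoc f false) (n+1) = y ∧ IsNonneg (Fin.snoc f false) ∧
      pathVal (Fin.snoc f false) 1 = 1 ∧
      pathVal (Fin.snoc f false) (n+1) - pathVal (Fin.snoc f false) (n+1-1) = -1 ∧
      numPeaks (Fin.snoc f false) = j+1)).card
      = (Finset.univ.filter (fun f : Fin n → Bool =>
          pathVal f n = y + 1 ∧ IsNonneg f ∧ pathVal f 1 = 1 ∧
          numPeaks f + (if stepVal f (n-1) = 1 then 1 else 0) = j+1)).card := by
    congr 1
    refine Finset.filter_congr (fun f _ => ?_)
    rw [show n+1-1 = n from rfl, pathVal_snoc_top, pathVal_snoc f false (le_refl n),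
      pathVal_snoc f false hn, isNonneg_snoc, pathVal_snoc_top, numPeaks_snoc]
    have hiff : (0 < n ∧ stepVal f (n-1) = 1 ∧ (false : Bool) = false) ↔
        stepVal f (n-1) = 1 := by
      constructor
      · rintro ⟨-, h, -⟩; exact h
      · intro h; exact ⟨hn, h, rfl⟩
    rw [if_congr hiff rfl rfl]
    norm_num
    constructor
    · rintro ⟨h1, ⟨h2a, -⟩, h3, h5⟩
      exact ⟨by omega, h2a, h3, h5⟩
    · rintro ⟨h1, h2, h3, h5⟩
      exact ⟨by omega, ⟨h2, by omega⟩, h3, h5⟩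
  rw [hfalse]
  rw [Nup, Ndown]
  rw [← Finset.card_filter_add_card_filter_not
    (s := Finset.univ.filter (fun f : Fin n → Bool =>
      pathVal f n = y + 1 ∧ IsNonneg f ∧ pathVal f 1 = 1 ∧
      numPeaks f + (if stepVal f (n-1) = 1 then 1 else 0) = j+1))
    (p := fun f => pathVal f n - pathVal f (n - 1) = 1)]
  have hkey : ∀ f : Fin n → Bool,
      pathVal f n - pathVal f (n-1) = stepVal f (n-1) := by
    intro f; rw [stepVal_eq_diff, show n-1+1 = n by omega]
  congr 1
  · rw [Finset.filter_filter]
    congr 1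
    ext f
    simp only [Finset.mem_filter, Finset.mem_univ, true_and]
    have := hkey f
    constructor
    · rintro ⟨⟨a, b, c, d⟩, e⟩
      rw [if_pos (by omega)] at d
      exact ⟨a, b, c, by omega, by omega⟩
    · rintro ⟨a, b, c, e, d⟩
      exact ⟨⟨a, b, c, by rw [if_pos (by omega)]; omega⟩, by omega⟩
  · rw [Finset.filter_filter]
    congr 1
    ext f
    simp only [Finset.mem_filter, Finset.mem_univ, true_and]
    have := hkey f
    have hpm := stepVal_pm f (show n-1 < n by omega)
    constructor
    · rintro ⟨⟨a, b, c, d⟩, e⟩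
      rw [if_neg (by omega)] at d
      exact ⟨a, b, c, by omega, by omega⟩
    · rintro ⟨a, b, c, e, d⟩
      exact ⟨⟨a, b, c, by rw [if_neg (by omega)]; omega⟩, by omega⟩
lemma pathVal_zero {n : ℕ} (f : Fin n → Bool) : pathVal f 0 = 0 := rfl

lemma pathVal_one {n : ℕ} (f : Fin n → Bool) : pathVal f 1 = stepVal f 0 := by
  rw [show (1:ℕ) = 0 + 1 from rfl, pathVal_succ, pathVal_zero, zero_add]

lemma Nup_len_zero (y : ℤ) (j : ℕ) : Nup 0 y j = 0 := by
  rw [Nup, Finset.card_eq_zero, Finset.filter_eq_empty_iff]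
  rintro f - ⟨-, -, -, h4, -⟩
  norm_num [pathVal_zero] at h4

lemma Ndown_len_zero (y : ℤ) (j : ℕ) : Ndown 0 y j = 0 := by
  rw [Ndown, Finset.card_eq_zero, Finset.filter_eq_empty_iff]
  rintro f - ⟨-, -, h3, -, -⟩
  rw [pathVal_one, stepVal] at h3
  norm_num at h3

lemma numPeaks_len_one (f : Fin 1 → Bool) : numPeaks f = 0 := by
  rw [numPeaks, Finset.card_eq_zero, Finset.filter_eq_empty_iff]
  rintro x hx ⟨h1, h2, -⟩
  simp at hx
  omega

lemma Nup_len_one (y : ℤ) {j : ℕ} (hj : 1 ≤ j) : Nup 1 y j = 0 := by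
  rw [Nup, Finset.card_eq_zero, Finset.filter_eq_empty_iff]
  rintro f - ⟨-, -, -, -, h5⟩
  rw [numPeaks_len_one] at h5
  omega

lemma Ndown_len_one (y : ℤ) (j : ℕ) : Ndown 1 y j = 0 := by
  rw [Ndown, Finset.card_eq_zero, Finset.filter_eq_empty_iff]
  rintro f - ⟨-, -, h3, h4, -⟩
  rw [show (1:ℕ) - 1 = 0 from rfl, pathVal_zero] at h4
  omega

/-- Up-ending paths to a nonpositive endpoint don't exist. -/
lemma Nup_nonpos {l : ℕ} (hl : 1 ≤ l) {y : ℤ} (hy : y ≤ 0) (j : ℕ) : Nup l y j = 0 := by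
  rw [Nup, Finset.card_eq_zero, Finset.filter_eq_empty_iff]
  rintro f - ⟨h1, h2, -, h4, -⟩
  have := isNonneg_nonneg h2 (show l - 1 ≤ l by omega)
  omega

lemma pathVal_const_true {l : ℕ} {i : ℕ} (hi : i ≤ l) :
    pathVal (fun _ => true : Fin l → Bool) i = i := by
  induction i with
  | zero => rfl
  | succ k ih =>
    rw [pathVal_succ, ih (by omega), stepVal, dif_pos (show k < l by omega)]
    simp

lemma all_steps_one {l : ℕ} {f : Fin l → Bool} (h : pathVal f l = l) {k : ℕ} (hk : k < l) :
    stepVal f k = 1 := by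
  rcases stepVal_pm f hk with h1 | h1
  · exact h1
  · exfalso
    have hsum : pathVal f l = stepVal f k + ∑ x ∈ (Finset.range l).erase k, stepVal f x := by
      rw [pathVal_eq_sum, Finset.add_sum_erase _ _ (Finset.mem_range.mpr hk)]
    have hbound : ∑ x ∈ (Finset.range l).erase k, stepVal f x
        ≤ ((Finset.range l).erase k).card • (1:ℤ) := by
      refine Finset.sum_le_card_nsmul _ _ _ (fun x hx => ?_)
      have hx' : x < l := Finset.mem_range.mp (Finset.mem_of_mem_erase hx)
      rcases stepVal_pm f hx' with h2 | h2 <;> omega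
    rw [Finset.card_erase_of_mem (Finset.mem_range.mpr hk), Finset.card_range] at hbound
    rw [nsmul_eq_mul, mul_one] at hbound
    have : ((l - 1 : ℕ) : ℤ) ≤ (l : ℤ) - 1 := by omega
    omega

lemma eq_const_true {l : ℕ} {f : Fin l → Bool} (h : pathVal f l = l) :
    f = (fun _ => true) := by
  funext x
  have := all_steps_one h x.isLt
  rw [stepVal, dif_pos x.isLt] at this
  by_cases hf : f x
  · rw [show (⟨x.val, x.isLt⟩ : Fin l) = x from rfl] at *
    exact hf
  · rw [show (⟨x.val, x.isLt⟩ : Fin l) = x from rfl] at this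
    rw [if_neg hf] at this
    norm_num at this

/-- A path with no peaks, first step up and last step up is all-up. -/
lemma no_peaks_all_up {l : ℕ} (hl : 1 ≤ l) {f : Fin l → Bool}
    (hfirst : pathVal f 1 = 1) (hlast : pathVal f l - pathVal f (l - 1) = 1)
    (hpeaks : numPeaks f = 0) {k : ℕ} (hk : k < l) : stepVal f k = 1 := by
  induction k using Nat.strong_induction_on with
  | _ k ih =>
    by_contra hne
    rcases stepVal_pm f hk with h1 | h1
    · exact hne h1
    have hk0 : k ≠ 0 := by
      intro h0
      rw [h0] at h1
      rw [pathVal_one] at hfirst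
      omega
    have hklast : k ≠ l - 1 := by
      intro hkl
      have : stepVal f (l-1) = pathVal f l - pathVal f (l-1) := by
        rw [stepVal_eq_diff, show l-1+1 = l by omega]
      rw [hkl] at h1
      omega
    have hprev : stepVal f (k-1) = 1 := ih (k-1) (by omega) (by omega)
    have hpk : IsPeak f k := (isPeak_iff f k).mpr ⟨by omega, hk, hprev, h1⟩
    have : k ∈ (Finset.range l).filter (fun x => IsPeak f x) :=
      Finset.mem_filter.mpr ⟨Finset.mem_range.mpr hk, hpk⟩
    rw [numPeaks, Finset.card_eq_zero] at hpeaks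
    rw [hpeaks] at this
    exact absurd this (Finset.notMem_empty k)

lemma Nup_peaks_zero (l : ℕ) (y : ℤ) :
    Nup l y 0 = if (y = l ∧ 1 ≤ l) then 1 else 0 := by
  rcases Nat.eq_zero_or_pos l with hl | hl
  · subst hl
    rw [Nup_len_zero, if_neg (by omega)]
  by_cases hy : y = l
  · subst hy
    rw [if_pos ⟨rfl, hl⟩, Nup]
    have : (Finset.univ : Finset (Fin l → Bool)).filter
        (fun f => pathVal f l = (l:ℤ) ∧ IsNonneg f ∧ pathVal f 1 = 1 ∧
          pathVal f l - pathVal f (l - 1) = 1 ∧ numPeaks f = 0)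
        = {fun _ => true} := by
      ext f
      simp only [Finset.mem_filter, Finset.mem_univ, true_and, Finset.mem_singleton]
      constructor
      · rintro ⟨h1, -, -, -, -⟩
        exact eq_const_true h1
      · rintro rfl
        refine ⟨pathVal_const_true (le_refl l), fun i hi => ?_, ?_, ?_, ?_⟩
        · rw [pathVal_const_true (show i ≤ l by simp at hi; omega)]
          positivity
        · rw [pathVal_const_true hl]; norm_num
        · rw [pathVal_const_true (le_refl l), pathVal_const_true (show l - 1 ≤ l by omega)]
          omega
        · rw [numPeaks, Finset.card_eq_zero, Finset.filter_eq_empty_iff]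
          intro x hx hpk
          rw [isPeak_iff] at hpk
          rcases hpk with ⟨-, h2, -, h4⟩
          rw [stepVal, dif_pos h2] at h4
          simp at h4
    rw [this, Finset.card_singleton]
  · rw [if_neg (by tauto), Nup, Finset.card_eq_zero, Finset.filter_eq_empty_iff]
    rintro f - ⟨h1, h2, h3, h4, h5⟩
    apply hy
    rw [← h1]
    have hall : ∀ k < l, stepVal f k = 1 := fun k hk =>
      no_peaks_all_up hl h3 h4 h5 hk
    rw [pathVal_eq_sum]
    rw [Finset.sum_congr rfl (fun x hx => hall x (Finset.mem_range.mp hx))]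
    simp
lemma ichoose_neg_left {m : ℤ} (p : ℤ) (h : m < 0) : ichoose m p = 0 := by
  rw [ichoose, if_neg (by omega)]

lemma ichoose_neg_right (m : ℤ) {p : ℤ} (h : p < 0) : ichoose m p = 0 := by
  rw [ichoose, if_neg (by omega)]

lemma ichoose_zero_pos_s11 {p : ℤ} (hp : 1 ≤ p) : ichoose 0 p = 0 := by
  rw [ichoose, if_pos ⟨le_refl 0, by omega⟩]
  rw [Int.toNat_zero, Nat.choose_eq_zero_of_lt (by omega)]
  rfl

lemma ichoose_pascal_s11 {a b : ℤ} (ha : 0 ≤ a) (hb : 0 ≤ b) :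
    ichoose (a+1) (b+1) = ichoose a (b+1) + ichoose a b := by
  rw [ichoose, ichoose, ichoose, if_pos ⟨by omega, by omega⟩, if_pos ⟨ha, by omega⟩,
    if_pos ⟨ha, hb⟩]
  have e1 : (a+1).toNat = a.toNat + 1 := by omega
  have e2 : (b+1).toNat = b.toNat + 1 := by omega
  rw [e1, e2, Nat.choose_succ_succ]
  push_cast
  ring

lemma ichoose_rel {a b : ℤ} (ha : 0 ≤ a) (hb : 0 ≤ b) :
    (b+1) * ichoose a (b+1) = (a - b) * ichoose a b := by
  lift a to ℕ using ha with A
  lift b to ℕ using hb with B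
  rw [ichoose, ichoose, if_pos ⟨by positivity, by positivity⟩,
    if_pos ⟨by positivity, by positivity⟩]
  have e1 : ((A:ℤ)).toNat = A := by omega
  have e2 : ((B:ℤ)+1).toNat = B + 1 := by omega
  have e3 : ((B:ℤ)).toNat = B := by omega
  rw [e1, e2, e3]
  have h1 := Nat.add_one_mul_choose_eq A B
  have h2 := Nat.choose_succ_succ A B
  have h1' : ((A:ℤ)+1) * (A.choose B : ℤ) = ((A+1).choose (B+1) : ℤ) * ((B:ℤ)+1) := by
    exact_mod_cast h1
  have h2' : (((A+1).choose (B+1) : ℕ) : ℤ) = (A.choose B : ℤ) + (A.choose (B+1) : ℤ) := by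
    exact_mod_cast h2
  linear_combination -h1' - ((B:ℤ)+1) * h2'

lemma hchoose_even {num : ℤ} (h : 2 ∣ num) (p : ℤ) :
    hchoose num p = ichoose (num/2 - 1) p := if_pos h

lemma hchoose_odd {num : ℤ} (h : ¬ 2 ∣ num) (p : ℤ) : hchoose num p = 0 := if_neg h

lemma hchoose_small {num : ℤ} (h : num ≤ 1) (p : ℤ) : hchoose num p = 0 := by
  by_cases hd : 2 ∣ num
  · rw [hchoose_even hd, ichoose_neg_left _ (by omega)]
  · exact hchoose_odd hd p

lemma hchoose_zero (num : ℤ) :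
    hchoose num 0 = if 2 ∣ num ∧ 2 ≤ num then 1 else 0 := by
  by_cases hd : 2 ∣ num
  · rw [hchoose_even hd]
    by_cases h2 : 2 ≤ num
    · rw [if_pos ⟨hd, h2⟩, ichoose, if_pos ⟨by omega, le_refl 0⟩]
      simp
    · rw [if_neg (by tauto), ichoose_neg_left _ (by omega)]
  · rw [hchoose_odd hd, if_neg (by tauto)]

/-- The key binomial identity for the induction step (peaks `≥ 2`). -/
lemma keyIdentity (a b : ℤ) (K : ℕ) (ha : 1 ≤ a) :
    ((K:ℤ)+1) * ((a-b) * ichoose a ((K:ℤ)+1) * ichoose b ((K:ℤ)+1)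
        - (a-b-1) * ichoose (a-1) ((K:ℤ)+1) * ichoose b ((K:ℤ)+1))
    = ((K:ℤ)+2) * (ichoose (a-1) K * ichoose (b-1) K * (a-b))
      + ((K:ℤ)+1) * ((a-b+1) * ichoose a ((K:ℤ)+1) * ichoose (b-1) ((K:ℤ)+1)
        - (a-b) * ichoose (a-1) ((K:ℤ)+1) * ichoose (b-1) ((K:ℤ)+1)) := by
  have hK : (0:ℤ) ≤ K := by positivity
  rcases le_or_gt b 0 with hb | hb
  · have e1 : ichoose b ((K:ℤ)+1) = 0 := by
      rcases lt_or_eq_of_le hb with h | h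
      · exact ichoose_neg_left _ h
      · rw [h]; exact ichoose_zero_pos_s11 (by omega)
    have e2 : ichoose (b-1) ((K:ℤ)+1) = 0 := ichoose_neg_left _ (by omega)
    have e3 : ichoose (b-1) (K:ℤ) = 0 := ichoose_neg_left _ (by omega)
    rw [e1, e2, e3]; ring
  · -- b ≥ 1
    have hpa : ichoose a ((K:ℤ)+1) = ichoose (a-1) ((K:ℤ)+1) + ichoose (a-1) (K:ℤ) := by
      have := ichoose_pascal_s11 (a := a-1) (b := (K:ℤ)) (by omega) hK
      rw [show a - 1 + 1 = a by ring] at this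
      exact this
    have hpb : ichoose b ((K:ℤ)+1) = ichoose (b-1) ((K:ℤ)+1) + ichoose (b-1) (K:ℤ) := by
      have := ichoose_pascal_s11 (a := b-1) (b := (K:ℤ)) (by omega) hK
      rw [show b - 1 + 1 = b by ring] at this
      exact this
    have h1 : ((K:ℤ)+1) * ichoose (a-1) ((K:ℤ)+1) = (a-1-(K:ℤ)) * ichoose (a-1) (K:ℤ) :=
      ichoose_rel (by omega) hK
    have h2 : ((K:ℤ)+1) * ichoose (b-1) ((K:ℤ)+1) = (b-1-(K:ℤ)) * ichoose (b-1) (K:ℤ) :=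
      ichoose_rel (by omega) hK
    rw [hpa, hpb]
    linear_combination (ichoose (b-1) (K:ℤ)) * h1 - (ichoose (a-1) (K:ℤ)) * h2
lemma hchoose_2mul (c p : ℤ) : hchoose (2*c+2) p = ichoose c p := by
  rw [hchoose_even ⟨c+1, by ring⟩]
  congr 1
  omega

lemma main_claims : ∀ l : ℕ,
    (∀ y : ℤ, 0 ≤ y → ∀ j : ℕ, 1 ≤ j → (l:ℤ) % 2 = y % 2 →
      (Nup l y j : ℤ) * j = hchoose ((l:ℤ) + y) ((j:ℤ)-1) * hchoose ((l:ℤ) - y) ((j:ℤ)-1) * y)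
    ∧ (∀ y : ℤ, 0 ≤ y → ∀ j : ℕ, 1 ≤ j → (l:ℤ) % 2 = y % 2 →
      (Ndown l y j : ℤ) * j
        = (y+1) * hchoose ((l:ℤ) + y + 2) ((j:ℤ)-1) * hchoose ((l:ℤ) - y) ((j:ℤ)-1)
          - y * hchoose ((l:ℤ) + y) ((j:ℤ)-1) * hchoose ((l:ℤ) - y) ((j:ℤ)-1)) := by
  intro l
  induction l with
  | zero =>
    constructor
    · intro y hy j hj hpar
      push_cast at hpar ⊢
      rw [Nup_len_zero]
      rcases eq_or_lt_of_le hy with rfl | hy1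
      · ring
      · have h2 : (2:ℤ) ∣ (0 - y) := by omega
        rw [hchoose_even h2, ichoose_neg_left _ (by omega)]
        ring
    · intro y hy j hj hpar
      push_cast at hpar ⊢
      rw [Ndown_len_zero]
      rcases eq_or_lt_of_le hy with rfl | hy1
      · have h2 : (2:ℤ) ∣ ((0:ℤ) - 0) := by omega
        rw [hchoose_even h2, ichoose_neg_left _ (by omega)]
        ring
      · have h2 : (2:ℤ) ∣ (0 - y) := by omega
        rw [hchoose_even h2, ichoose_neg_left _ (by omega)]
        ring
  | succ n ih =>
    obtain ⟨ihU, ihD⟩ := ih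
    rcases Nat.eq_zero_or_pos n with rfl | hn
    · -- l = 1
      constructor
      · intro y hy j hj hpar
        push_cast at hpar ⊢
        rw [Nup_len_one y hj, hchoose_small (by omega : (1:ℤ)-y ≤ 1)]
        ring
      · intro y hy j hj hpar
        push_cast at hpar ⊢
        rw [Ndown_len_one, hchoose_small (by omega : (1:ℤ)-y ≤ 1)]
        ring
    · -- step, n ≥ 1
      constructor
      · intro y hy j hj hpar
        push_cast at hpar ⊢
        rcases eq_or_lt_of_le hy with rfl | hy1
        · rw [Nup_nonpos (by omega) (le_refl 0)]
          push_cast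
          ring
        · have hparn : (n:ℤ) % 2 = (y-1) % 2 := by omega
          have hU := ihU (y-1) (by omega) j hj hparn
          have hD := ihD (y-1) (by omega) j hj hparn
          rw [rec_up n hn y j]
          push_cast
          rw [show (n:ℤ) + (y-1) + 2 = (n:ℤ) + 1 + y by ring] at hD
          rw [show (n:ℤ) - (y-1) = (n:ℤ) + 1 - y by ring] at hU hD
          linear_combination hU + hD
      · intro y hy j hj hpar
        push_cast at hpar ⊢
        obtain ⟨m, rfl⟩ : ∃ m, j = m + 1 := ⟨j - 1, by omega⟩
        have hparn : (n:ℤ) % 2 = (y+1) % 2 := by omega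
        rw [rec_down n hn y hy m]
        push_cast
        rw [show ((m:ℤ) + 1 - 1) = (m:ℤ) by ring]
        rcases Nat.eq_zero_or_pos m with rfl | hm
        · -- j = 1
          rw [Nup_peaks_zero n (y+1)]
          have hD := ihD (y+1) (by omega) 1 (le_refl 1) hparn
          push_cast at hD
          try rw [show ((1:ℤ) - 1) = 0 by ring] at hD
          simp only [Nat.cast_zero] at hD ⊢
          simp only [hchoose_zero] at hD ⊢
          push_cast [Nat.cast_ite]
          split_ifs at hD ⊢ <;> omega
        · -- j = m + 1, m ≥ 1
          obtain ⟨K, rfl⟩ : ∃ K, m = K + 1 := ⟨m - 1, by omega⟩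
          push_cast
          have hU := ihU (y+1) (by omega) (K+1) (by omega) hparn
          have hD := ihD (y+1) (by omega) (K+1+1) (by omega) hparn
          push_cast at hU hD
          rw [show ((K:ℤ) + 1 - 1) = (K:ℤ) by ring] at hU
          rw [show ((K:ℤ) + 1 + 1 - 1) = (K:ℤ) + 1 by ring] at hD
          obtain ⟨a, ha2⟩ : ∃ a : ℤ, (n:ℤ) + y + 1 = 2*a := by
            have : (2:ℤ) ∣ ((n:ℤ) + y + 1) := by omega
            exact this
          obtain ⟨b, hb2⟩ : ∃ b : ℤ, (n:ℤ) - y - 1 = 2*b := by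
            have : (2:ℤ) ∣ ((n:ℤ) - y - 1) := by omega
            exact this
          have ha1 : 1 ≤ a := by omega
          -- convert all hchoose to ichoose
          rw [show (n:ℤ) + (y+1) + 2 = 2*a+2 by omega] at hD
          rw [show (n:ℤ) + (y+1) = 2*(a-1)+2 by omega,
              show (n:ℤ) - (y+1) = 2*(b-1)+2 by omega] at hU hD
          rw [show (n:ℤ) + 1 + y + 2 = 2*a+2 by omega,
              show (n:ℤ) + 1 - y = 2*b+2 by omega,
              show (n:ℤ) + 1 + y = 2*(a-1)+2 by omega]
          simp only [hchoose_2mul] at hU hD ⊢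
          have key := keyIdentity a b K ha1
          have hy2 : y = a - b - 1 := by omega
          subst hy2
          apply mul_left_cancel₀ (show ((K:ℤ)+1) ≠ 0 by positivity)
          linear_combination ((K:ℤ)+2) * hU + ((K:ℤ)+1) * hD - key


/-- The number of nonnegative Bernoulli paths of length `l` from `0` to
`y ≥ 1` with exactly `j ≥ 1` peaks, starting and ending with an up step,
equals `binomial((l+y)/2-1, j-1) · binomial((l-y)/2-1, j-1) · (y/j)`
(stated multiplied through by `j`). -/
theorem card_excursion_type_uu (l j : ℕ) (y : ℤ) (hy : 1 ≤ y) (hj : 1 ≤ j)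
    (hpar : (l : ℤ) % 2 = y % 2) :
    (((Finset.univ : Finset (Fin l → Bool)).filter
        (fun f => pathVal f l = y ∧ IsNonneg f ∧
          pathVal f 1 = 1 ∧ pathVal f l - pathVal f (l - 1) = 1 ∧
          numPeaks f = j)).card : ℤ) * (j : ℤ)
      = hchoose ((l : ℤ) + y) ((j : ℤ) - 1) *
        hchoose ((l : ℤ) - y) ((j : ℤ) - 1) * y := by
  exact (main_claims l).1 y (by omega) j hj hpar
end

section
/- The number of meanders of length 2N+1 with exactly k peaks and ending at a strictly positive position equals binomial(N+1,k)·binomial(N,k). -/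
namespace MeanderProof
open Finset

variable {n : ℕ}

lemma pathVal_zero (f : Fin n → Bool) : pathVal f 0 = 0 := by
  simp [pathVal]

lemma pathVal_succ (f : Fin n → Bool) (i : ℕ) (h : i < n) :
    pathVal f (i + 1) = pathVal f i + (if f ⟨i, h⟩ then 1 else -1) := by
  unfold pathVal
  rw [Finset.sum_range_succ, dif_pos h]

lemma pathVal_snoc (f : Fin n → Bool) (b : Bool) {i : ℕ} (h : i ≤ n) :
    pathVal (Fin.snoc f b) i = pathVal f i := by
  unfold pathVal
  apply Finset.sum_congr rfl
  intro j hj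
  simp only [Finset.mem_range] at hj
  have hjn : j < n := lt_of_lt_of_le hj h
  rw [dif_pos (Nat.lt_succ_of_lt hjn), dif_pos hjn]
  have : (⟨j, Nat.lt_succ_of_lt hjn⟩ : Fin (n+1)) = Fin.castSucc ⟨j, hjn⟩ := rfl
  rw [this, Fin.snoc_castSucc]

lemma pathVal_snoc_last (f : Fin n → Bool) (b : Bool) :
    pathVal (Fin.snoc f b) (n + 1) = pathVal f n + (if b then 1 else -1) := by
  rw [pathVal_succ (Fin.snoc f b) n (Nat.lt_succ_self n), pathVal_snoc f b le_rfl]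
  have : (⟨n, Nat.lt_succ_self n⟩ : Fin (n+1)) = Fin.last n := rfl
  rw [this, Fin.snoc_last]

lemma step_true_iff (f : Fin n → Bool) (i : ℕ) (h : i < n) :
    pathVal f (i+1) = pathVal f i + 1 ↔ f ⟨i, h⟩ = true := by
  rw [pathVal_succ f i h]
  cases hf : f ⟨i, h⟩ <;> simp [hf] <;> omega

lemma step_false_iff (f : Fin n → Bool) (i : ℕ) (h : i < n) :
    pathVal f (i+1) = pathVal f i - 1 ↔ f ⟨i, h⟩ = false := by
  rw [pathVal_succ f i h]
  cases hf : f ⟨i, h⟩ <;> simp [hf] <;> omega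

lemma isPeak_succ_iff (f : Fin n → Bool) {y : ℕ} (h1 : y + 1 < n) :
    IsPeak f (y + 1) ↔ f ⟨y, by omega⟩ = true ∧ f ⟨y + 1, h1⟩ = false := by
  unfold IsPeak
  have e1 := step_true_iff f y (by omega)
  have e2 := step_false_iff f (y+1) h1
  simp only [Nat.add_sub_cancel]
  rw [e1, e2]
  simp [h1]

lemma isNonneg_snoc (f : Fin n → Bool) (b : Bool) :
    IsNonneg (Fin.snoc f b) ↔ IsNonneg f ∧ 0 ≤ pathVal f n + (if b then 1 else -1) := by
  unfold IsNonneg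
  constructor
  · intro H
    refine ⟨fun i hi => ?_, ?_⟩
    · simp only [Finset.mem_range] at hi
      rw [← pathVal_snoc f b (show i ≤ n by omega)]
      exact H i (by simp only [Finset.mem_range]; omega)
    · rw [← pathVal_snoc_last f b]
      exact H (n+1) (by simp)
  · rintro ⟨H1, H2⟩ i hi
    simp only [Finset.mem_range] at hi
    rcases Nat.lt_or_ge i (n+1) with h | h
    · rw [pathVal_snoc f b (show i ≤ n by omega)]
      exact H1 i (by simp only [Finset.mem_range]; omega)
    · have : i = n + 1 := by omega
      subst this
      rw [pathVal_snoc_last]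
      exact H2

lemma isPeak_snoc_lt (f : Fin n → Bool) (b : Bool) {x : ℕ} (hx : x < n) :
    IsPeak (Fin.snoc f b) x ↔ IsPeak f x := by
  rcases x with _ | y
  · simp [IsPeak]
  · rw [isPeak_succ_iff (Fin.snoc f b) (show y + 1 < n + 1 by omega),
        isPeak_succ_iff f hx]
    have e1 : (⟨y, by omega⟩ : Fin (n+1)) = Fin.castSucc ⟨y, by omega⟩ := rfl
    have e2 : (⟨y+1, by omega⟩ : Fin (n+1)) = Fin.castSucc ⟨y+1, hx⟩ := rfl
    rw [e1, e2, Fin.snoc_castSucc, Fin.snoc_castSucc]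

lemma isPeak_snoc_last {m : ℕ} (f : Fin (m+1) → Bool) (b : Bool) :
    IsPeak (Fin.snoc f b) (m+1) ↔ (f (Fin.last m) = true ∧ b = false) := by
  rw [isPeak_succ_iff (Fin.snoc f b) (show m + 1 < m + 2 by omega)]
  have e1 : (⟨m, by omega⟩ : Fin (m+2)) = Fin.castSucc (Fin.last m) := rfl
  have e2 : (⟨m+1, by omega⟩ : Fin (m+2)) = Fin.last (m+1) := rfl
  rw [e1, e2, Fin.snoc_castSucc, Fin.snoc_last]

lemma numPeaks_one (g : Fin 1 → Bool) : numPeaks g = 0 := by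
  unfold numPeaks
  rw [show Finset.range 1 = {0} from rfl, Finset.filter_singleton, if_neg (by simp [IsPeak])]
  simp

lemma numPeaks_snoc {m : ℕ} (f : Fin (m+1) → Bool) (b : Bool) :
    numPeaks (Fin.snoc f b) =
      numPeaks f + (if f (Fin.last m) = true ∧ b = false then 1 else 0) := by
  unfold numPeaks
  have hcong : Finset.filter (fun x => IsPeak (Fin.snoc f b) x) (Finset.range (m+1))
      = Finset.filter (fun x => IsPeak f x) (Finset.range (m+1)) := by
    apply Finset.filter_congr
    intro x hx
    simp only [Finset.mem_range] at hx
    simp [isPeak_snoc_lt f b hx]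
  rw [Finset.range_add_one, Finset.filter_insert, hcong]
  by_cases h : f (Fin.last m) = true ∧ b = false
  · rw [if_pos ((isPeak_snoc_last f b).mpr h), if_pos h,
      Finset.card_insert_of_notMem (by simp)]
  · rw [if_neg (fun hp => h ((isPeak_snoc_last f b).mp hp)), if_neg h, add_zero]

def downs {n : ℕ} (f : Fin n → Bool) : ℕ := ∑ j, (if f j then 0 else 1)

lemma downs_snoc (f : Fin n → Bool) (b : Bool) :
    downs (Fin.snoc f b) = downs f + (if b then 0 else 1) := by
  unfold downs
  rw [Fin.sum_univ_castSucc]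
  simp

lemma pathVal_total (f : Fin n → Bool) : pathVal f n = (n : ℤ) - 2 * downs f := by
  unfold pathVal downs
  rw [← Fin.sum_univ_eq_sum_range
    (fun j => if h : j < n then (if f ⟨j, h⟩ then (1:ℤ) else -1) else 0) n]
  have : ∀ i : Fin n,
      (if h : (i:ℕ) < n then (if f ⟨i, h⟩ then (1:ℤ) else -1) else 0)
        = 1 - 2 * (if f i then (0:ℤ) else 1) := by
    intro i
    rw [dif_pos i.isLt]
    have : (⟨(i:ℕ), i.isLt⟩ : Fin n) = i := rfl
    rw [this]
    cases hf : f i <;> simp [hf]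
  rw [Finset.sum_congr rfl (fun i _ => this i)]
  rw [Finset.sum_sub_distrib]
  push_cast
  simp [Finset.mul_sum]

lemma card_filter_last (Q : (Fin (n+1) → Bool) → Prop) [DecidablePred Q] (b : Bool) :
    ((Finset.univ : Finset (Fin (n+1) → Bool)).filter (fun f => Q f ∧ f (Fin.last n) = b)).card
      = ((Finset.univ : Finset (Fin n → Bool)).filter (fun g => Q (Fin.snoc g b))).card := by
  refine Finset.card_bij' (fun f _ => Fin.init f) (fun g _ => Fin.snoc g b) ?_ ?_ ?_ ?_
  · intro f hf
    simp only [Finset.mem_filter, Finset.mem_univ, true_and] at hf ⊢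
    have : Fin.snoc (Fin.init f) b = f := by
      rw [← hf.2]; exact Fin.snoc_init_self f
    rw [this]
    exact hf.1
  · intro g hg
    simp only [Finset.mem_filter, Finset.mem_univ, true_and] at hg ⊢
    exact ⟨hg, Fin.snoc_last _ _⟩
  · intro f hf
    simp only [Finset.mem_filter, Finset.mem_univ, true_and] at hf
    beta_reduce
    rw [← hf.2]
    exact Fin.snoc_init_self f
  · intro g _
    beta_reduce
    exact Fin.init_snoc (α := fun _ : Fin (n+1) => Bool) b g

def cntB (n d k : ℕ) (b : Bool) : ℕ :=
  ((Finset.univ : Finset (Fin (n+1) → Bool)).filter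
    (fun f => (IsNonneg f ∧ downs f = d ∧ numPeaks f = k) ∧ f (Fin.last n) = b)).card

def cntA (n d k : ℕ) : ℕ :=
  ((Finset.univ : Finset (Fin n → Bool)).filter
    (fun f => IsNonneg f ∧ downs f = d ∧ numPeaks f = k)).card

lemma cntA_split (n d k : ℕ) : cntA (n+1) d k = cntB n d k true + cntB n d k false := by
  unfold cntA cntB
  rw [← Finset.card_filter_add_card_filter_not
    (fun f : Fin (n+1) → Bool => f (Fin.last n) = true) (s := (Finset.univ.filter _))]
  rw [Finset.filter_filter, Finset.filter_filter]
  congr 2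
  apply Finset.filter_congr
  intro f _
  simp only [Bool.not_eq_true]

lemma numPeaks_zero (g : Fin 0 → Bool) : numPeaks g = 0 := by
  unfold numPeaks; simp

lemma numPeaks_snoc_true (f : Fin n → Bool) : numPeaks (Fin.snoc f true) = numPeaks f := by
  rcases n with _ | m
  · rw [numPeaks_one, numPeaks_zero]
  · rw [numPeaks_snoc, if_neg (by simp), add_zero]

lemma isNonneg_end (f : Fin n → Bool) (h : IsNonneg f) : 0 ≤ pathVal f n :=
  h n (by simp)

lemma card_split_last (R : (Fin (n+1) → Bool) → Prop) [DecidablePred R] :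
    (Finset.univ.filter R).card
      = (Finset.univ.filter (fun f => R f ∧ f (Fin.last n) = true)).card
        + (Finset.univ.filter (fun f => R f ∧ f (Fin.last n) = false)).card := by
  rw [← Finset.card_filter_add_card_filter_not
    (fun f : Fin (n+1) → Bool => f (Fin.last n) = true) (s := (Finset.univ.filter R))]
  rw [Finset.filter_filter, Finset.filter_filter]
  congr 2
  apply Finset.filter_congr
  intro f _
  simp only [Bool.not_eq_true]

lemma cntB_true (n d k : ℕ) : cntB n d k true = cntA n d k := by
  unfold cntB
  rw [card_filter_last]
  unfold cntA
  apply congrArg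
  apply Finset.filter_congr
  intro g _
  simp only [isNonneg_snoc, downs_snoc, numPeaks_snoc_true, if_pos rfl, add_zero]
  constructor
  · rintro ⟨⟨h1, _⟩, h2, h3⟩; exact ⟨h1, h2, h3⟩
  · rintro ⟨h1, h2, h3⟩
    exact ⟨⟨h1, by have := isNonneg_end g h1; simp; omega⟩, h2, h3⟩

lemma cntB_false_zero (n k : ℕ) : cntB n 0 k false = 0 := by
  unfold cntB
  rw [card_filter_last]
  rw [Finset.card_eq_zero, Finset.filter_eq_empty_iff]
  rintro g - ⟨-, hd, -⟩
  rw [downs_snoc] at hd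
  simp at hd

lemma cntB_false_succ (n d k : ℕ) :
    cntB (n+1) (d+1) k false
      = if 2*(d+1) ≤ n+2 then
          (match k with
            | 0 => cntB n d 0 false
            | (k'+1) => cntB n d k' true + cntB n d (k'+1) false)
        else 0 := by
  unfold cntB
  rw [card_filter_last]
  have hcong : ∀ g : Fin (n+1) → Bool,
      ((IsNonneg (Fin.snoc g false) ∧ downs (Fin.snoc g false) = d+1 ∧
          numPeaks (Fin.snoc g false) = k))
        ↔ ((2*(d+1) ≤ n+2) ∧ ((IsNonneg g ∧ downs g = d) ∧
            numPeaks g + (if g (Fin.last n) = true then 1 else 0) = k)) := by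
    intro g
    rw [isNonneg_snoc, downs_snoc, numPeaks_snoc]
    simp only [if_neg (Bool.false_ne_true), Bool.and_true]
    have hpv := pathVal_total g
    constructor
    · rintro ⟨⟨h1, h2⟩, h3, h4⟩
      have hd : downs g = d := by omega
      subst hd
      refine ⟨by rw [hpv] at h2; push_cast at h2; omega, ⟨h1, rfl⟩, ?_⟩
      rw [← h4]
      congr 1
      simp
    · rintro ⟨hg, ⟨h1, h2⟩, h3⟩
      subst h2
      refine ⟨⟨h1, by rw [hpv]; push_cast; omega⟩, by omega, ?_⟩
      rw [← h3]
      congr 1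
      simp
  rw [Finset.filter_congr (fun g _ => by
    rw [hcong g] : ∀ g ∈ (Finset.univ : Finset (Fin (n+1) → Bool)), _ ↔ _)]
  by_cases hg : 2*(d+1) ≤ n+2
  · rw [if_pos hg]
    rw [card_split_last (fun g : Fin (n+1) → Bool => (2*(d+1) ≤ n+2) ∧
      ((IsNonneg g ∧ downs g = d) ∧
        numPeaks g + (if g (Fin.last n) = true then 1 else 0) = k))]
    rcases k with _ | k'
    · have h1 : Finset.filter (fun f : Fin (n+1) → Bool => ((2*(d+1) ≤ n+2) ∧
          ((IsNonneg f ∧ downs f = d) ∧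
            numPeaks f + (if f (Fin.last n) = true then 1 else 0) = 0)) ∧
          f (Fin.last n) = true) Finset.univ = ∅ := by
        rw [Finset.filter_eq_empty_iff]
        rintro f _ ⟨⟨-, -, h3⟩, h4⟩
        rw [if_pos h4] at h3
        omega
      have h2 : Finset.filter (fun f : Fin (n+1) → Bool => ((2*(d+1) ≤ n+2) ∧
          ((IsNonneg f ∧ downs f = d) ∧
            numPeaks f + (if f (Fin.last n) = true then 1 else 0) = 0)) ∧
          f (Fin.last n) = false) Finset.univ
          = Finset.filter (fun f : Fin (n+1) → Bool =>
              (IsNonneg f ∧ downs f = d ∧ numPeaks f = 0) ∧ f (Fin.last n) = false)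
              Finset.univ := by
        apply Finset.filter_congr
        intro f _
        constructor
        · rintro ⟨⟨-, ⟨ha, hb⟩, h3⟩, h4⟩
          rw [if_neg (by simp [h4])] at h3
          exact ⟨⟨ha, hb, by omega⟩, h4⟩
        · rintro ⟨⟨ha, hb, hc⟩, h4⟩
          exact ⟨⟨hg, ⟨ha, hb⟩, by rw [if_neg (by simp [h4])]; omega⟩, h4⟩
      rw [h1, h2]
      simp only [Finset.card_empty, zero_add]
    · have h1 : Finset.filter (fun f : Fin (n+1) → Bool => ((2*(d+1) ≤ n+2) ∧
          ((IsNonneg f ∧ downs f = d) ∧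
            numPeaks f + (if f (Fin.last n) = true then 1 else 0) = k'+1)) ∧
          f (Fin.last n) = true) Finset.univ
          = Finset.filter (fun f : Fin (n+1) → Bool =>
              (IsNonneg f ∧ downs f = d ∧ numPeaks f = k') ∧ f (Fin.last n) = true)
              Finset.univ := by
        apply Finset.filter_congr
        intro f _
        constructor
        · rintro ⟨⟨-, ⟨ha, hb⟩, h3⟩, h4⟩
          rw [if_pos h4] at h3
          exact ⟨⟨ha, hb, by omega⟩, h4⟩
        · rintro ⟨⟨ha, hb, hc⟩, h4⟩
          exact ⟨⟨hg, ⟨ha, hb⟩, by rw [if_pos h4]; omega⟩, h4⟩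
      have h2 : Finset.filter (fun f : Fin (n+1) → Bool => ((2*(d+1) ≤ n+2) ∧
          ((IsNonneg f ∧ downs f = d) ∧
            numPeaks f + (if f (Fin.last n) = true then 1 else 0) = k'+1)) ∧
          f (Fin.last n) = false) Finset.univ
          = Finset.filter (fun f : Fin (n+1) → Bool =>
              (IsNonneg f ∧ downs f = d ∧ numPeaks f = k'+1) ∧ f (Fin.last n) = false)
              Finset.univ := by
        apply Finset.filter_congr
        intro f _
        constructor
        · rintro ⟨⟨-, ⟨ha, hb⟩, h3⟩, h4⟩
          rw [if_neg (by simp [h4])] at h3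
          exact ⟨⟨ha, hb, by omega⟩, h4⟩
        · rintro ⟨⟨ha, hb, hc⟩, h4⟩
          exact ⟨⟨hg, ⟨ha, hb⟩, by rw [if_neg (by simp [h4])]; omega⟩, h4⟩
      rw [h1, h2]
  · rw [if_neg hg]
    rw [Finset.card_eq_zero, Finset.filter_eq_empty_iff]
    rintro f _ ⟨h, -⟩
    exact hg h

def dch (d k : ℕ) : ℤ := match d with | 0 => 0 | e+1 => (e.choose k : ℤ)

def tf (n d k : ℕ) : ℤ :=
  if 2*d ≤ n then ((n-d).choose k : ℤ) * ((d.choose k : ℕ) : ℤ) - ((n-d+1).choose k : ℤ) * dch d k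
  else 0

def pf (n d k : ℕ) : ℤ :=
  if 2*d < n then ((n-d-1).choose k : ℤ) * ((d.choose k : ℕ) : ℤ) - ((n-d).choose k : ℤ) * dch d k
  else 0

lemma dch_succ (e k : ℕ) : dch (e+1) k = (e.choose k : ℤ) := rfl

lemma dch_zero (k : ℕ) : dch 0 k = 0 := rfl

lemma pasZ (x k : ℕ) : (((x+1).choose (k+1) : ℕ) : ℤ) = (x.choose k : ℤ) + (x.choose (k+1) : ℤ) := by
  exact_mod_cast Nat.choose_succ_succ x k

lemma dch_pas (e k : ℕ) : ((e.choose (k+1) : ℕ) : ℤ) = dch e k + dch e (k+1) := by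
  cases e with
  | zero => simp [dch]
  | succ e' => rw [dch_succ, dch_succ]; exact pasZ e' k

lemma pf_succ (n d k : ℕ) : pf (n+1) d k = tf n d k := by
  unfold pf tf
  by_cases h : 2*d ≤ n
  · rw [if_pos (by omega : 2*d < n+1), if_pos h]
    have e1 : n+1-d-1 = n-d := by omega
    have e2 : n+1-d = n-d+1 := by omega
    rw [e1, e2]
  · rw [if_neg (by omega), if_neg h]

lemma pf_eq_of_le {n d k : ℕ} (hd : 1 ≤ d) (h : 2*d ≤ n) :
    pf n d k = ((n-d-1).choose k : ℤ) * ((d.choose k : ℕ) : ℤ) - ((n-d).choose k : ℤ) * dch d k := by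
  unfold pf
  by_cases hlt : 2*d < n
  · rw [if_pos hlt]
  · rw [if_neg hlt]
    have hn : n = 2*d := by omega
    subst hn
    obtain ⟨e, rfl⟩ : ∃ e, d = e + 1 := ⟨d-1, by omega⟩
    have e1 : 2*(e+1)-(e+1)-1 = e := by omega
    have e2 : 2*(e+1)-(e+1) = e+1 := by omega
    rw [e1, e2, dch_succ]
    ring

lemma id2_none (n d k : ℕ) (h : ¬ 2*(d+1) ≤ n+2) :
    tf (n+2) (d+1) k - pf (n+2) (d+1) k = 0 := by
  unfold tf pf
  rw [if_neg (by omega), if_neg (by omega)]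
  ring

lemma id2_zero (n d : ℕ) (h : 2*(d+1) ≤ n+2) :
    tf (n+2) (d+1) 0 - pf (n+2) (d+1) 0 = tf (n+1) d 0 - pf (n+1) d 0 := by
  rw [pf_eq_of_le (by omega) h]
  unfold tf pf
  rw [if_pos h, if_pos (show 2*d ≤ n+1 by omega), if_pos (show 2*d < n+1 by omega)]
  simp only [Nat.choose_zero_right, Nat.cast_one, one_mul, mul_one]
  ring

lemma id2_succ (n d k' : ℕ) (h : 2*(d+1) ≤ n+2) :
    tf (n+2) (d+1) (k'+1) - pf (n+2) (d+1) (k'+1)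
      = pf (n+1) d k' + (tf (n+1) d (k'+1) - pf (n+1) d (k'+1)) := by
  obtain ⟨u, hnu, hdu⟩ : ∃ u, n = d + u ∧ d ≤ u := ⟨n - d, by omega, by omega⟩
  subst hnu
  rw [pf_eq_of_le (by omega) h]
  unfold tf pf
  rw [if_pos h, if_pos (show 2*d ≤ d+u+1 by omega), if_pos (show 2*d < d+u+1 by omega),
    if_pos (show 2*d < d+u+1 by omega)]
  have e1 : d+u+2-(d+1)-1 = u := by omega
  have e2 : d+u+2-(d+1) = u+1 := by omega
  have e3 : d+u+2-(d+1)+1 = u+2 := by omega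
  have e4 : d+u+1-d = u+1 := by omega
  have e5 : d+u+1-d+1 = u+2 := by omega
  have e6 : d+u+1-d-1 = u := by omega
  rw [e1, e2, e4, dch_succ]
  simp only [Nat.add_sub_cancel]
  rw [pasZ (u+1) k', pasZ u k', pasZ d k', dch_pas d k']
  ring

lemma isNonneg_nil (g : Fin 0 → Bool) : IsNonneg g := by
  intro i hi
  simp only [Finset.mem_range] at hi
  have : i = 0 := by omega
  subst this
  rw [pathVal_zero]

lemma downs_nil (g : Fin 0 → Bool) : downs g = 0 := by
  simp [downs]

lemma cntB0 (d k : ℕ) (b : Bool) :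
    cntB 0 d k b = if (b = true ∧ d = 0 ∧ k = 0) then 1 else 0 := by
  unfold cntB
  rw [card_filter_last, Finset.univ_unique, Finset.filter_singleton]
  beta_reduce
  have hnn := isNonneg_nil (default : Fin 0 → Bool)
  have hd := downs_nil (default : Fin 0 → Bool)
  cases b
  · have hpred : ¬ (IsNonneg (Fin.snoc (default : Fin 0 → Bool) false)
        ∧ downs (Fin.snoc (default : Fin 0 → Bool) false) = d
        ∧ numPeaks (Fin.snoc (default : Fin 0 → Bool) false) = k) := by
      rintro ⟨hno, -, -⟩
      rw [isNonneg_snoc] at hno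
      have h2 := hno.2
      rw [pathVal_zero] at h2
      simp at h2
    rw [if_neg (show ¬(false = true ∧ d = 0 ∧ k = 0) by simp)]
    split_ifs with hc
    · exact absurd hc hpred
    · simp
  · by_cases hdk : d = 0 ∧ k = 0
    · obtain ⟨rfl, rfl⟩ := hdk
      have hpred : (IsNonneg (Fin.snoc (default : Fin 0 → Bool) true)
          ∧ downs (Fin.snoc (default : Fin 0 → Bool) true) = 0
          ∧ numPeaks (Fin.snoc (default : Fin 0 → Bool) true) = 0) := by
        refine ⟨?_, ?_, ?_⟩
        · rw [isNonneg_snoc]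
          exact ⟨hnn, by rw [pathVal_zero]; simp⟩
        · rw [downs_snoc, hd]; simp
        · exact numPeaks_one _
      rw [if_pos (show true = true ∧ 0 = 0 ∧ 0 = 0 from ⟨rfl, rfl, rfl⟩)]
      split_ifs with hc
      · simp
      · exact absurd hpred hc
    · have hpred : ¬ (IsNonneg (Fin.snoc (default : Fin 0 → Bool) true)
          ∧ downs (Fin.snoc (default : Fin 0 → Bool) true) = d
          ∧ numPeaks (Fin.snoc (default : Fin 0 → Bool) true) = k) := by
        rintro ⟨-, h2, h3⟩
        rw [downs_snoc, hd] at h2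
        rw [numPeaks_one] at h3
        simp at h2
        exact hdk ⟨h2.symm, h3.symm⟩
      rw [if_neg (show ¬(true = true ∧ d = 0 ∧ k = 0) by simpa using hdk)]
      split_ifs with hc
      · exact absurd hc hpred
      · simp

lemma pf1 (d k : ℕ) : pf 1 d k = if (d = 0 ∧ k = 0) then 1 else 0 := by
  unfold pf
  rcases d with _ | e
  · rw [if_pos (by omega)]
    rcases k with _ | k'
    · simp [dch_zero]
    · simp [dch_zero, Nat.choose_succ_succ]
  · rw [if_neg (by omega), if_neg (by simp)]

lemma tf1 (d k : ℕ) : tf 1 d k = if (d = 0 ∧ k = 0) then 1 else 0 := by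
  unfold tf
  rcases d with _ | e
  · rw [if_pos (by omega)]
    rcases k with _ | k'
    · simp [dch_zero]
    · simp [dch_zero, Nat.choose_succ_succ]
  · rw [if_neg (by omega), if_neg (by simp)]

lemma main_ind (n : ℕ) : ∀ d k,
    ((cntB n d k true : ℤ) = pf (n+1) d k)
      ∧ ((cntB n d k false : ℤ) = tf (n+1) d k - pf (n+1) d k) := by
  induction n with
  | zero =>
    intro d k
    constructor
    · rw [cntB0, pf1]
      split_ifs with h1 h2 h2 <;> simp_all
    · rw [cntB0, tf1, pf1]
      split_ifs with h1 h2 h2 <;> simp_all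
  | succ n ih =>
    intro d k
    constructor
    · rw [cntB_true, cntA_split, pf_succ]
      push_cast
      rw [(ih d k).1, (ih d k).2, pf_succ]
      ring
    · rcases d with _ | e
      · rw [cntB_false_zero]
        unfold tf pf
        rw [if_pos (by omega), if_pos (by omega)]
        simp only [Nat.sub_zero, dch_zero, mul_zero, sub_zero]
        rcases k with _ | k'
        · simp
        · simp [Nat.choose_succ_succ]
      · by_cases hg2 : 2*(e+1) ≤ n+2
        · rw [cntB_false_succ n e k, if_pos hg2]
          rcases k with _ | k'
          · rw [id2_zero n e hg2]
            exact (ih e 0).2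
          · rw [id2_succ n e k' hg2]
            push_cast
            rw [(ih e k').1, (ih e (k'+1)).2]
        · rw [cntB_false_succ n e k, if_neg hg2, id2_none n e k hg2]
          simp

lemma cntA_tf (n d k : ℕ) : (cntA (n+1) d k : ℤ) = tf (n+1) d k := by
  rw [cntA_split]
  push_cast
  rw [(main_ind n d k).1, (main_ind n d k).2]
  ring

end MeanderProof

open MeanderProof in
theorem card_positive_meanders_odd' (N k : ℕ) :
    ((Finset.univ : Finset (Fin (2 * N + 1) → Bool)).filter
        (fun f => IsNonneg f ∧ 0 < pathVal f (2 * N + 1) ∧ numPeaks f = k)).card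
      = (N + 1).choose k * N.choose k := by
  have h1 : ((Finset.univ : Finset (Fin (2 * N + 1) → Bool)).filter
        (fun f => IsNonneg f ∧ 0 < pathVal f (2 * N + 1) ∧ numPeaks f = k))
      = ((Finset.univ : Finset (Fin (2 * N + 1) → Bool)).filter
        (fun f => IsNonneg f ∧ numPeaks f = k)) := by
    apply Finset.filter_congr
    intro f _
    constructor
    · rintro ⟨ha, -, hc⟩; exact ⟨ha, hc⟩
    · rintro ⟨ha, hc⟩
      refine ⟨ha, ?_, hc⟩
      have he := isNonneg_end f ha
      rw [pathVal_total] at he ⊢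
      push_cast at he ⊢
      omega
  rw [h1]
  have h2 : ((Finset.univ : Finset (Fin (2 * N + 1) → Bool)).filter
        (fun f => IsNonneg f ∧ numPeaks f = k)).card
      = ∑ d ∈ Finset.range (N+1), (Finset.filter (fun f => downs f = d)
          ((Finset.univ : Finset (Fin (2 * N + 1) → Bool)).filter
            (fun f => IsNonneg f ∧ numPeaks f = k))).card := by
    apply Finset.card_eq_sum_card_fiberwise
    intro f hf
    simp only [Finset.mem_coe, Finset.mem_filter, Finset.mem_univ, true_and] at hf
    have he := isNonneg_end f hf.1
    rw [pathVal_total] at he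
    push_cast at he
    simp only [Finset.mem_coe, Finset.mem_range]
    omega
  rw [h2]
  have h3 : ∀ d, Finset.filter (fun f => downs f = d)
        ((Finset.univ : Finset (Fin (2 * N + 1) → Bool)).filter
          (fun f => IsNonneg f ∧ numPeaks f = k))
      = ((Finset.univ : Finset (Fin (2 * N + 1) → Bool)).filter
          (fun f => IsNonneg f ∧ downs f = d ∧ numPeaks f = k)) := by
    intro d
    rw [Finset.filter_filter]
    apply Finset.filter_congr
    intro f _
    tauto
  have h4 : ∀ d ∈ Finset.range (N+1),
      ((((Finset.univ : Finset (Fin (2 * N + 1) → Bool)).filter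
          (fun f => IsNonneg f ∧ downs f = d ∧ numPeaks f = k)).card : ℤ))
        = tf (2*N+1) d k := by
    intro d _
    exact cntA_tf (2*N) d k
  have h5 : ∀ d ∈ Finset.range (N+1), tf (2*N+1) d k
      = ((2*N+2-(d+1)).choose k : ℤ) * dch (d+1) k - ((2*N+2-d).choose k : ℤ) * dch d k := by
    intro d hd
    simp only [Finset.mem_range] at hd
    unfold tf
    rw [if_pos (by omega)]
    have e1 : 2*N+2-(d+1) = 2*N+1-d := by omega
    have e2 : 2*N+2-d = 2*N+1-d+1 := by omega
    rw [e1, e2, dch_succ]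
  have h6 : (∑ d ∈ Finset.range (N+1), ((Finset.filter (fun f => downs f = d)
          ((Finset.univ : Finset (Fin (2 * N + 1) → Bool)).filter
            (fun f => IsNonneg f ∧ numPeaks f = k))).card : ℤ))
      = ((N+1).choose k : ℤ) * (N.choose k : ℤ) := by
    calc (∑ d ∈ Finset.range (N+1), ((Finset.filter (fun f => downs f = d)
          ((Finset.univ : Finset (Fin (2 * N + 1) → Bool)).filter
            (fun f => IsNonneg f ∧ numPeaks f = k))).card : ℤ))
        = ∑ d ∈ Finset.range (N+1),
            ((fun i => ((2*N+2-i).choose k : ℤ) * dch i k) (d+1)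
              - (fun i => ((2*N+2-i).choose k : ℤ) * dch i k) d) := by
          apply Finset.sum_congr rfl
          intro d hd
          rw [h3 d]
          exact (h4 d hd).trans (h5 d hd)
      _ = (fun i => ((2*N+2-i).choose k : ℤ) * dch i k) (N+1)
            - (fun i => ((2*N+2-i).choose k : ℤ) * dch i k) 0 :=
          Finset.sum_range_sub (fun i => ((2*N+2-i).choose k : ℤ) * dch i k) (N+1)
      _ = ((N+1).choose k : ℤ) * (N.choose k : ℤ) := by
          simp only []
          have e1 : 2*N+2-(N+1) = N+1 := by omega
          rw [e1, dch_succ, dch_zero]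
          ring
  exact_mod_cast h6

/-- The number of meanders of length `2N+1` with exactly `k` peaks ending at a
strictly positive position is `binomial(N+1,k) · binomial(N,k)`. -/
theorem card_positive_meanders_odd (N k : ℕ) :
    ((Finset.univ : Finset (Fin (2 * N + 1) → Bool)).filter
        (fun f => IsNonneg f ∧ 0 < pathVal f (2 * N + 1) ∧ numPeaks f = k)).card
      = (N + 1).choose k * N.choose k := by
  exact card_positive_meanders_odd' N k
end

section
/- For a Bernoulli path S of length n and H = Φ_n(S) the associated simple chain, the number of peaks of S in [0,j] equals ⌊H_{j+1}/2⌋ for every j in [0,n]. -/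
/-- The extended step sequence of the path encoded by `f`: `ΔS_i` for
`1 ≤ i ≤ n` is the `i`-th step, with the conventions `ΔS_0 = -1` (`false`)
and `ΔS_i = +1` (`true`) for `i ≥ n + 1`. -/
def stepExt {n : ℕ} (f : Fin n → Bool) (i : ℕ) : Bool :=
  if h : 1 ≤ i ∧ i ≤ n then f ⟨i - 1, by omega⟩ else decide (n + 1 ≤ i)

/-- The map `Φₙ` from Bernoulli paths with `n` steps to simple chains with
`n+1` steps (encoded by their 0/1 increments): `ΔH_i = 1` iff
`ΔS_i ≠ ΔS_{i-1}`, with `ΔS_0 = -1`, `ΔS_{n+1} = +1`. -/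
def Phi {n : ℕ} (f : Fin n → Bool) : Fin (n + 1) → Bool :=
  fun i => stepExt f ((i : ℕ) + 1) != stepExt f (i : ℕ)

/-- The value `H_j` of the simple chain encoded by the 0/1 increments `g`. -/
def chainVal {n : ℕ} (g : Fin (n + 1) → Bool) (j : ℕ) : ℕ :=
  ∑ i ∈ Finset.range j, (if h : i < n + 1 then (if g ⟨i, h⟩ then 1 else 0) else 0)

section Aux
variable {n : ℕ} (f : Fin n → Bool)

lemma pathVal_succ_s15 (k : ℕ) :
    pathVal f (k + 1) = pathVal f k
      + (if h : k < n then (if f ⟨k, h⟩ then (1 : ℤ) else -1) else 0) :=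
  Finset.sum_range_succ _ _

lemma isPeak_iff_s15 (x : ℕ) :
    IsPeak f x ↔ 0 < x ∧ x < n ∧ stepExt f x = true ∧ stepExt f (x + 1) = false := by
  unfold IsPeak
  constructor
  · rintro ⟨h0, hn, h1, h2⟩
    refine ⟨h0, hn, ?_, ?_⟩
    · have hx1 : x - 1 < n := by omega
      have : x = (x - 1) + 1 := by omega
      rw [this, pathVal_succ_s15] at h1
      rw [dif_pos hx1] at h1
      have hf : f ⟨x - 1, hx1⟩ = true := by
        by_contra hf
        simp [hf] at h1
      rw [stepExt, dif_pos ⟨by omega, by omega⟩]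
      exact hf
    · rw [pathVal_succ_s15, dif_pos hn] at h2
      have hf : f ⟨x, hn⟩ = false := by
        by_contra hf
        simp at hf; simp [hf] at h2; omega
      rw [stepExt, dif_pos ⟨by omega, by omega⟩]
      simpa using hf
  · rintro ⟨h0, hn, h1, h2⟩
    rw [stepExt, dif_pos ⟨by omega, by omega⟩] at h1
    rw [stepExt, dif_pos ⟨by omega, by omega⟩] at h2
    refine ⟨h0, hn, ?_, ?_⟩
    · have hx1 : x - 1 < n := by omega
      have hx : x = (x - 1) + 1 := by omega
      rw [hx, pathVal_succ_s15, dif_pos hx1]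
      have : f ⟨x - 1, hx1⟩ = true := h1
      simp [this]
    · rw [pathVal_succ_s15, dif_pos hn]
      have : f ⟨x + 1 - 1, by omega⟩ = false := h2
      simp at this
      simp [this, sub_eq_add_neg]

lemma key (b : ℕ → Bool) (hb : b 0 = false) : ∀ j : ℕ,
    (∑ i ∈ Finset.range j, (if b (i + 1) != b i then 1 else 0))
      = 2 * ((Finset.range j).filter (fun i => b i = true ∧ b (i + 1) = false)).card
        + (if b j then 1 else 0) := by
  intro j
  induction j with
  | zero => simp [hb]
  | succ j ih =>
    have hcard : ((Finset.range (j + 1)).filter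
          (fun i => b i = true ∧ b (i + 1) = false)).card
        = ((Finset.range j).filter (fun i => b i = true ∧ b (i + 1) = false)).card
          + (if b j = true ∧ b (j + 1) = false then 1 else 0) := by
      rw [Finset.range_add_one, Finset.filter_insert]
      split
      · rw [Finset.card_insert_of_notMem (by simp)]
      · simp [*]
    rw [Finset.sum_range_succ, hcard, ih]
    cases hj : b j <;> cases hj1 : b (j + 1) <;> simp [hj, hj1] <;> omega

end Aux

/-- For a Bernoulli path `S` with `H = Φₙ(S)`, the number of peaks of `S` in
`[0, j]` equals `⌊H_{j+1} / 2⌋`, for every `j ∈ [0, n]`. -/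


theorem peaks_upTo_eq_chainVal (n : ℕ) (f : Fin n → Bool) (j : ℕ) (hj : j ≤ n) :
    ((Finset.range n).filter (fun x => x ≤ j ∧ IsPeak f x)).card
      = chainVal (Phi f) (j + 1) / 2 := by
  set b := stepExt f with hb
  have hb0 : b 0 = false := by
    rw [hb, stepExt]
    rw [dif_neg (by omega)]
    simp
  have hset : ((Finset.range n).filter (fun x => x ≤ j ∧ IsPeak f x))
      = ((Finset.range (j + 1)).filter (fun i => b i = true ∧ b (i + 1) = false)) := by
    ext x
    simp only [Finset.mem_filter, Finset.mem_range]
    constructor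
    · rintro ⟨hxn, hxj, hp⟩
      rw [isPeak_iff_s15] at hp
      exact ⟨by omega, hp.2.2.1, hp.2.2.2⟩
    · rintro ⟨hx, h1, h2⟩
      have hx0 : 0 < x := by
        rcases Nat.eq_zero_or_pos x with h | h
        · rw [h, hb0] at h1; exact absurd h1 (by simp)
        · exact h
      have hxn : x < n := by
        by_contra hc
        push_neg at hc
        have hxe : x = n := by omega
        rw [hb, stepExt, dif_neg (by omega)] at h2
        simp [hxe] at h2
      exact ⟨hxn, by omega, (isPeak_iff_s15 f x).mpr ⟨hx0, hxn, h1, h2⟩⟩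
  have hchain : chainVal (Phi f) (j + 1)
      = ∑ i ∈ Finset.range (j + 1), (if b (i + 1) != b i then 1 else 0) := by
    unfold chainVal
    refine Finset.sum_congr rfl ?_
    intro i hi
    simp only [Finset.mem_range] at hi
    rw [dif_pos (by omega)]
    rfl
  rw [hset, hchain, key b hb0 (j + 1)]
  split <;> omega
end

section
/- The map Ψ_{2N} that flips (from down to up) every step of a bridge occurring at a hitting time of a new negative minimum is a bijection from bridges of length 2N onto meanders of length 2N; moreover for each k it restricts to a bijection from bridges with exactly k peaks onto meanders with exactly k peaks, preserving peak positions. -/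
/-- Time `i+1` is a hitting time of a new (negative) minimum of the path. -/
def NewNegMin {n : ℕ} (f : Fin n → Bool) (i : ℕ) : Prop :=
  pathVal f (i + 1) < 0 ∧ ∀ j ∈ Finset.range (i + 1), pathVal f (i + 1) < pathVal f j

instance {n : ℕ} (f : Fin n → Bool) (i : ℕ) : Decidable (NewNegMin f i) := by
  unfold NewNegMin; infer_instance

/-- The map `Ψ₂ₙ`: flip (from down to up) every step of the path occurring at
a hitting time of a new (negative) minimum. The step indexed by `i : Fin (2N)`
is the one from time `i` to time `i+1`. -/
def Psi {N : ℕ} (f : Fin (2 * N) → Bool) : Fin (2 * N) → Bool :=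
  fun i => if NewNegMin f (i : ℕ) then true else f i

namespace PsiProof

variable {n : ℕ} (f : Fin n → Bool)

lemma pathVal_zero : pathVal f 0 = 0 := by simp [pathVal]

lemma pathVal_succ {i : ℕ} (h : i < n) :
    pathVal f (i + 1) = pathVal f i + (if f ⟨i, h⟩ then (1 : ℤ) else -1) := by
  simp [pathVal, Finset.sum_range_succ, h]

lemma pathVal_succ_of_ge {i : ℕ} (h : n ≤ i) :
    pathVal f (i + 1) = pathVal f i := by
  have : ¬ i < n := by omega
  simp [pathVal, Finset.sum_range_succ, this]

lemma pathVal_sub_one_le {i : ℕ} : pathVal f i - 1 ≤ pathVal f (i + 1) := by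
  rcases lt_or_ge i n with h | h
  · rw [pathVal_succ f h]; split <;> omega
  · rw [pathVal_succ_of_ge f h]; omega

lemma pathVal_le_add_one {i : ℕ} : pathVal f (i + 1) ≤ pathVal f i + 1 := by
  rcases lt_or_ge i n with h | h
  · rw [pathVal_succ f h]; split <;> omega
  · rw [pathVal_succ_of_ge f h]; omega

/-- discrete IVT -/
lemma ivt : ∀ b a, a ≤ b → ∀ v : ℤ, pathVal f a < v → v ≤ pathVal f b →
    ∃ t, a < t ∧ t ≤ b ∧ pathVal f t = v := by
  intro b
  induction b with
  | zero =>
    intro a ha v h1 h2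
    interval_cases a
    rw [pathVal_zero] at h1 h2
    omega
  | succ b ih =>
    intro a ha v h1 h2
    rcases lt_or_ge (pathVal f b) v with hb | hb
    · have := pathVal_le_add_one f (i := b)
      have hab : a ≠ b + 1 := by rintro rfl; omega
      exact ⟨b + 1, by omega, le_refl _, by omega⟩
    · have hab : a ≠ b + 1 := by rintro rfl; omega
      obtain ⟨t, ht1, ht2, ht3⟩ := ih a (by omega) v h1 hb
      exact ⟨t, ht1, by omega, ht3⟩

lemma newNegMin_lt {i : ℕ} (h : NewNegMin f i) : i < n := by
  by_contra hn
  have h2 := h.2 i (by simp)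
  rw [pathVal_succ_of_ge f (by omega)] at h2
  omega

lemma newNegMin_step {i : ℕ} (h : NewNegMin f i) (hi : i < n) : f ⟨i, hi⟩ = false := by
  have h2 := h.2 i (by simp)
  rw [pathVal_succ f hi] at h2
  by_contra hb
  simp only [Bool.not_eq_false] at hb
  rw [hb] at h2; simp at h2

/-- number of new-min steps before time `i` -/
def cnt (i : ℕ) : ℕ := ((Finset.range i).filter (fun j => NewNegMin f j)).card

lemma cnt_zero : cnt f 0 = 0 := by simp [cnt]

lemma cnt_succ (i : ℕ) : cnt f (i + 1) = cnt f i + (if NewNegMin f i then 1 else 0) := by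
  unfold cnt
  rw [Finset.range_add_one, Finset.filter_insert]
  split
  · rw [Finset.card_insert_of_notMem (by simp)]
  · simp

lemma cnt_mono {i j : ℕ} (h : i ≤ j) : cnt f i ≤ cnt f j :=
  Finset.card_le_card (Finset.filter_subset_filter _ (by simpa using Finset.range_subset_range.2 h))

/-- running minimum bound -/
lemma le_pathVal : ∀ t, -(cnt f t : ℤ) ≤ pathVal f t := by
  intro t
  induction t using Nat.strong_induction_on with
  | _ t ih =>
    match t with
    | 0 => simp [pathVal_zero, cnt_zero]
    | s + 1 =>
      rcases lt_or_ge s n with hs | hs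
      · by_cases hm : NewNegMin f s
        · have h1 : pathVal f (s+1) = pathVal f s - 1 := by
            rw [pathVal_succ f hs, newNegMin_step f hm hs]; norm_num; ring
          have := ih s (by omega)
          rw [cnt_succ, if_pos hm]
          push_cast; omega
        · have hcc : cnt f (s+1) = cnt f s := by rw [cnt_succ, if_neg hm]; simp
          unfold NewNegMin at hm
          push_neg at hm
          rcases lt_or_ge (pathVal f (s+1)) 0 with h0 | h0
          · obtain ⟨j, hj, hjle⟩ := hm h0
            simp only [Finset.mem_range] at hj
            have := ih j (by omega)
            have := cnt_mono f (show j ≤ s + 1 by omega)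
            push_cast at *
            omega
          · have : (0:ℤ) ≤ cnt f (s+1) := by positivity
            omega
      · rw [pathVal_succ_of_ge f hs]
        have := ih s (by omega)
        have := cnt_mono f (show s ≤ s + 1 by omega)
        push_cast at *; omega

/-- the running minimum `-cnt` is attained -/
lemma min_attained : ∀ t, ∃ j ≤ t, pathVal f j = -(cnt f t : ℤ) := by
  intro t
  induction t with
  | zero => exact ⟨0, le_refl _, by simp [pathVal_zero, cnt_zero]⟩
  | succ s ih =>
    by_cases hm : NewNegMin f s
    · refine ⟨s + 1, le_refl _, ?_⟩
      obtain ⟨j, hj, hjv⟩ := ih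
      have h2 := hm.2 j (by simp; omega)
      have h3 := le_pathVal f (s+1)
      rw [cnt_succ, if_pos hm] at h3 ⊢
      push_cast at *
      omega
    · obtain ⟨j, hj, hjv⟩ := ih
      rw [cnt_succ, if_neg hm]
      exact ⟨j, by omega, by simpa using hjv⟩

lemma newNegMin_val {t : ℕ} (h : NewNegMin f t) :
    pathVal f t = -(cnt f t : ℤ) ∧ pathVal f (t + 1) = -(cnt f t : ℤ) - 1 := by
  have hlt := newNegMin_lt f h
  have hstep : pathVal f (t+1) = pathVal f t - 1 := by
    rw [pathVal_succ f hlt, newNegMin_step f h hlt]; norm_num; ring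
  have h3 := le_pathVal f (t+1)
  have hc : cnt f (t+1) = cnt f t + 1 := by rw [cnt_succ, if_pos h]
  obtain ⟨j, hj, hjv⟩ := min_attained f t
  have h2 := h.2 j (by simp; omega)
  rw [hc] at h3
  push_cast at *
  omega


lemma pathVal_of_ge {i : ℕ} (h : n ≤ i) : pathVal f i = pathVal f n := by
  induction i with
  | zero =>
    have hn0 : (0 : ℕ) = n := by omega
    exact congrArg (pathVal f) hn0
  | succ s ih =>
    rcases eq_or_lt_of_le h with he | hlt
    · rw [← he]
    · rw [pathVal_succ_of_ge f (by omega), ih (by omega)]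

/-- general version of Psi -/
def PsiG (i : Fin n) : Bool := if NewNegMin f (i : ℕ) then true else f i

lemma cnt_eq_of_no_min {a b : ℕ} (hab : a ≤ b)
    (hno : ∀ s, a ≤ s → s < b → ¬ NewNegMin f s) : cnt f b = cnt f a := by
  unfold cnt
  congr 1
  ext j
  simp only [Finset.mem_filter, Finset.mem_range]
  constructor
  · rintro ⟨h1, h2⟩
    refine ⟨?_, h2⟩
    by_contra hc
    exact hno j (by omega) h1 h2
  · rintro ⟨h1, h2⟩
    exact ⟨by omega, h2⟩

lemma pathVal_psiG : ∀ i, pathVal (PsiG f) i = pathVal f i + 2 * cnt f i := by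
  intro i
  induction i with
  | zero => simp [pathVal_zero, cnt_zero]
  | succ s ih =>
    rcases lt_or_ge s n with hs | hs
    · rw [pathVal_succ (PsiG f) hs, pathVal_succ f hs, cnt_succ, ih]
      by_cases hm : NewNegMin f s
      · rw [newNegMin_step f hm hs]
        simp only [PsiG, hm, if_pos, if_true]
        push_cast; ring
      · simp only [PsiG, if_neg hm]
        push_cast; ring
    · have hm : ¬ NewNegMin f s := fun h => by have := newNegMin_lt f h; omega
      rw [pathVal_succ_of_ge (PsiG f) hs, pathVal_succ_of_ge f hs, cnt_succ, ih, if_neg hm]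
      push_cast; ring

lemma psiG_nonneg (i : ℕ) : 0 ≤ pathVal (PsiG f) i := by
  have h1 := le_pathVal f i
  have : (0:ℤ) ≤ (cnt f i : ℤ) := by positivity
  rw [pathVal_psiG]
  omega

lemma cnt_pathVal_le (i : ℕ) : (cnt f i : ℤ) ≤ pathVal (PsiG f) i := by
  have h1 := le_pathVal f i
  rw [pathVal_psiG]
  omega


/-- `i` is the last visit time of its level, and the level is below half the endpoint. -/
def LastLow (g : Fin n → Bool) (i : ℕ) : Prop :=
  (∀ t ∈ Finset.Ioc i n, pathVal g i < pathVal g t) ∧ 2 * pathVal g i < pathVal g n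

instance (g : Fin n → Bool) (i : ℕ) : Decidable (LastLow g i) := by
  unfold LastLow; infer_instance

/-- the inverse map: flip last-low up-steps back down -/
def PhiG (g : Fin n → Bool) (i : Fin n) : Bool := if LastLow g (i : ℕ) then false else g i

/-- For a bridge `f`, last-low times of `Ψf` are exactly the new-min times of `f`. -/
lemma lastLow_psiG_iff (hf : pathVal f n = 0) (i : ℕ) :
    LastLow (PsiG f) i ↔ NewNegMin f i := by
  have hZn : pathVal (PsiG f) n = 2 * cnt f n := by rw [pathVal_psiG, hf]; ring
  constructor
  · rintro ⟨h1, h2⟩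
    have hiltn : i < n := by
      by_contra hc
      rw [pathVal_of_ge (PsiG f) (by omega)] at h2
      have : (0:ℤ) ≤ (cnt f n : ℤ) := by positivity
      omega
    have hZi := cnt_pathVal_le f i
    have hin : cnt f i < cnt f n := by omega
    -- there is a new-min step in [i, n); take the least one
    have hex : ∃ t, i ≤ t ∧ NewNegMin f t := by
      have hsub : (Finset.range i).filter (fun j => NewNegMin f j) ⊆
          (Finset.range n).filter (fun j => NewNegMin f j) := by
        apply Finset.filter_subset_filter
        exact Finset.range_subset_range.2 (by omega)
      obtain ⟨x, hx1, hx2⟩ := Finset.exists_of_ssubset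
        (hsub.ssubset_of_ne (fun h => by simp only [cnt] at hin; rw [h] at hin; omega))
      simp only [Finset.mem_filter, Finset.mem_range] at hx1 hx2
      have hxi : ¬ x < i := fun hlt => hx2 ⟨hlt, hx1.2⟩
      exact ⟨x, by omega, hx1.2⟩
    classical
    set t := Nat.find hex with htdef
    have hts := Nat.find_spec hex
    obtain ⟨ht1, ht2⟩ := hts
    have htn : t < n := newNegMin_lt f ht2
    rcases eq_or_lt_of_le ht1 with heq | hti
    · rw [heq]; exact ht2
    · exfalso
      have hct : cnt f t = cnt f i :=
        cnt_eq_of_no_min f ht1 (fun s h1 h2 hm => Nat.find_min hex h2 ⟨h1, hm⟩)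
      have hZt : pathVal (PsiG f) t = cnt f i := by
        rw [pathVal_psiG, (newNegMin_val f ht2).1, hct]; ring
      have := h1 t (by simp; omega)
      omega
  · intro hm
    have hin := newNegMin_lt f hm
    obtain ⟨hv1, hv2⟩ := newNegMin_val f hm
    have hci : cnt f (i+1) = cnt f i + 1 := by rw [cnt_succ, if_pos hm]
    have hZi : pathVal (PsiG f) i = cnt f i := by rw [pathVal_psiG, hv1]; ring
    constructor
    · intro t ht
      simp only [Finset.mem_Ioc] at ht
      have h1 := cnt_pathVal_le f t
      have h2 := cnt_mono f (show i + 1 ≤ t by omega)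
      omega
    · have := cnt_mono f (show i + 1 ≤ n by omega)
      omega

/-- Phi is a left inverse of Psi on bridges -/
lemma phiG_psiG (hf : pathVal f n = 0) : PhiG (PsiG f) = f := by
  funext i
  simp only [PhiG, lastLow_psiG_iff f hf]
  by_cases hm : NewNegMin f (i : ℕ)
  · rw [if_pos hm, newNegMin_step f hm i.isLt]
  · rw [if_neg hm]
    simp [PsiG, hm]


variable (g : Fin n → Bool)

/-- meander hypothesis -/
def Mea : Prop := ∀ i, i ≤ n → 0 ≤ pathVal g i

lemma lastLow_lt (hg : Mea g) {i : ℕ} (h : LastLow g i) : i < n := by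
  by_contra hc
  have h2 := h.2
  rw [pathVal_of_ge g (by omega)] at h2
  have := hg n (le_refl n)
  omega

lemma lastLow_step (hg : Mea g) {i : ℕ} (h : LastLow g i) (hi : i < n) : g ⟨i, hi⟩ = true := by
  have h1 := h.1 (i + 1) (by simp [Finset.mem_Ioc]; omega)
  rw [pathVal_succ g hi] at h1
  by_contra hb
  simp only [Bool.not_eq_true] at hb
  rw [hb] at h1; simp at h1

lemma lastLow_unique (hg : Mea g) {i i' : ℕ} (h : LastLow g i) (h' : LastLow g i')
    (hv : pathVal g i = pathVal g i') : i = i' := by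
  by_contra hc
  rcases Nat.lt_or_ge i i' with hlt | hge
  · have := h.1 i' (by simp [Finset.mem_Ioc]; exact ⟨hlt, le_of_lt (lastLow_lt g hg h')⟩)
    omega
  · have hlt : i' < i := by omega
    have := h'.1 i (by simp [Finset.mem_Ioc]; exact ⟨hlt, le_of_lt (lastLow_lt g hg h)⟩)
    omega

lemma lastVisit_exists (hg : Mea g) {v : ℤ} (h0 : 0 ≤ v) (h2 : 2 * v < pathVal g n) :
    ∃ i, LastLow g i ∧ pathVal g i = v := by
  classical
  set F := (Finset.range (n + 1)).filter (fun t => pathVal g t = v) with hF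
  have hvn : v ≤ pathVal g n := by omega
  have hne : F.Nonempty := by
    rcases eq_or_lt_of_le h0 with h0' | h0'
    · exact ⟨0, by simp [hF, pathVal_zero, ← h0']⟩
    · obtain ⟨t, ht1, ht2, ht3⟩ := ivt g n 0 (Nat.zero_le n) v (by rw [pathVal_zero]; omega) hvn
      exact ⟨t, by simp [hF, ht3]; omega⟩
  set i := F.max' hne with hi
  have him : i ∈ F := F.max'_mem hne
  simp only [hF, Finset.mem_filter, Finset.mem_range] at him
  obtain ⟨hin, hiv⟩ := him
  refine ⟨i, ⟨?_, by rw [hiv]; exact h2⟩, hiv⟩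
  intro t ht
  simp only [Finset.mem_Ioc] at ht
  by_contra hc
  push_neg at hc
  have htv : pathVal g t < v := by
    rcases eq_or_lt_of_le hc with he | hlt
    · exfalso
      have : t ∈ F := by simp [hF, ← he, hiv]; omega
      have := F.le_max' t this
      omega
    · omega
  have htnn : 0 ≤ pathVal g t := hg t ht.2
  obtain ⟨t', ht1', ht2', ht3'⟩ := ivt g n t ht.2 v htv hvn
  have : t' ∈ F := by simp [hF, ht3']; omega
  have := F.le_max' t' this
  omega

/-- number of last-low times before time `i` -/
def llcnt (i : ℕ) : ℕ := ((Finset.range i).filter (fun j => LastLow g j)).card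

lemma llcnt_succ (i : ℕ) : llcnt g (i + 1) = llcnt g i + (if LastLow g i then 1 else 0) := by
  unfold llcnt
  rw [Finset.range_add_one, Finset.filter_insert]
  split
  · rw [Finset.card_insert_of_notMem (by simp)]
  · simp

lemma llcnt_mono {i j : ℕ} (h : i ≤ j) : llcnt g i ≤ llcnt g j :=
  Finset.card_le_card (Finset.filter_subset_filter _ (by simpa using Finset.range_subset_range.2 h))

lemma llcnt_val (hg : Mea g) {i : ℕ} (h : LastLow g i) : (llcnt g i : ℤ) = pathVal g i := by
  classical
  have hin : i < n := lastLow_lt g hg h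
  set T := (Finset.range i).filter (fun j => LastLow g j) with hT
  have himg : T.image (pathVal g) = Finset.Ico (0 : ℤ) (pathVal g i) := by
    ext v
    simp only [Finset.mem_image, Finset.mem_Ico, hT, Finset.mem_filter, Finset.mem_range]
    constructor
    · rintro ⟨t, ⟨ht1, ht2⟩, rfl⟩
      refine ⟨hg t (by omega), ?_⟩
      exact ht2.1 i (by simp [Finset.mem_Ioc]; omega)
    · rintro ⟨hv0, hvi⟩
      have h2v : 2 * v < pathVal g n := by
        have := h.2
        omega
      obtain ⟨t, htl, htv⟩ := lastVisit_exists g hg hv0 h2v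
      refine ⟨t, ⟨?_, htl⟩, htv⟩
      rcases Nat.lt_or_ge t i with hlt | hge
      · exact hlt
      · exfalso
        rcases eq_or_lt_of_le hge with he | hlt
        · rw [← he] at htv; omega
        · have := h.1 t (by simp [Finset.mem_Ioc]; exact ⟨hlt, le_of_lt (lastLow_lt g hg htl)⟩)
          omega
  have hinj : Set.InjOn (pathVal g) T := by
    intro a ha b hb hab
    simp only [hT, Finset.mem_filter, Finset.mem_range, Finset.coe_filter, Set.mem_setOf_eq] at ha hb
    exact lastLow_unique g hg ha.2 hb.2 hab
  have hcard : T.card = (pathVal g i).toNat := by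
    rw [← Finset.card_image_of_injOn hinj, himg, Int.card_Ico]
    simp
  have h0 : 0 ≤ pathVal g i := hg i (by omega)
  unfold llcnt
  rw [← hT, hcard]
  omega

lemma llcnt_pos_struct (hg : Mea g) {t : ℕ} (hpos : 0 < llcnt g t) :
    ∃ i', LastLow g i' ∧ i' < t ∧ (llcnt g t : ℤ) = pathVal g i' + 1 := by
  classical
  set F := (Finset.range t).filter (fun j => LastLow g j) with hF
  have hne : F.Nonempty := Finset.card_pos.mp hpos
  set i' := F.max' hne with hi'
  have him : i' ∈ F := F.max'_mem hne
  simp only [hF, Finset.mem_filter, Finset.mem_range] at him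
  obtain ⟨hit, hil⟩ := him
  refine ⟨i', hil, hit, ?_⟩
  have heq : llcnt g t = llcnt g (i' + 1) := by
    unfold llcnt
    congr 1
    ext j
    simp only [Finset.mem_filter, Finset.mem_range]
    constructor
    · rintro ⟨h1, h2⟩
      have : j ∈ F := by simp [hF, h1, h2]
      have := F.le_max' j this
      exact ⟨by omega, h2⟩
    · rintro ⟨h1, h2⟩
      exact ⟨by omega, h2⟩
  rw [heq, llcnt_succ, if_pos hil]
  push_cast
  rw [llcnt_val g hg hil]

lemma llcnt_le_pathVal (hg : Mea g) {t : ℕ} (ht : t ≤ n) : (llcnt g t : ℤ) ≤ pathVal g t := by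
  rcases Nat.eq_zero_or_pos (llcnt g t) with h0 | hpos
  · rw [h0]; exact_mod_cast hg t ht
  · obtain ⟨i', hil, hit, hval⟩ := llcnt_pos_struct g hg hpos
    have := hil.1 t (by simp [Finset.mem_Ioc]; omega)
    omega

lemma pathVal_phiG (hg : Mea g) : ∀ i, pathVal (PhiG g) i = pathVal g i - 2 * llcnt g i := by
  intro i
  induction i with
  | zero => simp [pathVal_zero, llcnt]
  | succ s ih =>
    rcases lt_or_ge s n with hs | hs
    · rw [pathVal_succ (PhiG g) hs, pathVal_succ g hs, llcnt_succ, ih]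
      by_cases hm : LastLow g s
      · rw [lastLow_step g hg hm hs]
        simp only [PhiG, hm, if_pos, if_true]
        push_cast; norm_num; ring
      · simp only [PhiG, if_neg hm]
        push_cast; ring
    · have hm : ¬ LastLow g s := fun h => by have := lastLow_lt g hg h; omega
      rw [pathVal_succ_of_ge (PhiG g) hs, pathVal_succ_of_ge g hs, llcnt_succ, ih, if_neg hm]
      push_cast; ring

lemma two_dvd_pathVal : ∀ t, t ≤ n → (2 : ℤ) ∣ (pathVal g t - t) := by
  intro t
  induction t with
  | zero => intro _; simp [pathVal_zero]
  | succ s ih =>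
    intro hs
    have hd := ih (by omega)
    rw [pathVal_succ g (by omega)]
    obtain ⟨k, hk⟩ := hd
    split
    · exact ⟨k, by push_cast; omega⟩
    · exact ⟨k - 1, by push_cast; omega⟩

/-- the inverse map produces a bridge -/
lemma pathVal_phiG_end (hg : Mea g) (hn : (2 : ℤ) ∣ (n : ℤ)) : pathVal (PhiG g) n = 0 := by
  have hZn0 : 0 ≤ pathVal g n := hg n (le_refl n)
  have hev : (2 : ℤ) ∣ pathVal g n := by
    obtain ⟨k, hk⟩ := two_dvd_pathVal g n (le_refl n)
    obtain ⟨k', hk'⟩ := hn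
    exact ⟨k + k', by omega⟩
  rw [pathVal_phiG g hg]
  rcases Nat.eq_zero_or_pos (llcnt g n) with h0 | hpos
  · rw [h0]
    -- no last-low times at all: endpoint must be 0
    push_cast
    by_contra hc
    have hZpos : 0 < pathVal g n := by omega
    obtain ⟨i, hil, hiv⟩ := lastVisit_exists g hg (le_refl 0) (by omega)
    have hin : i < n := lastLow_lt g hg hil
    have : i ∈ (Finset.range n).filter (fun j => LastLow g j) := by
      simp [hin, hil]
    have := Finset.card_pos.mpr ⟨i, this⟩
    unfold llcnt at h0
    omega
  · obtain ⟨i', hil, hit, hval⟩ := llcnt_pos_struct g hg hpos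
    -- pathVal g n ≤ 2 * llcnt g n
    have hub : pathVal g n ≤ 2 * (llcnt g n : ℤ) := by
      by_contra hc
      push_neg at hc
      obtain ⟨t, htl, htv⟩ := lastVisit_exists g hg (by positivity) hc
      have htn : t < n := lastLow_lt g hg htl
      have h1 : (llcnt g t : ℤ) = (llcnt g n : ℤ) := by rw [llcnt_val g hg htl, htv]
      have h2 : llcnt g (t + 1) = llcnt g t + 1 := by rw [llcnt_succ, if_pos htl]
      have h3 : llcnt g (t + 1) ≤ llcnt g n := llcnt_mono g (by omega)
      omega
    have hlb : 2 * (llcnt g n : ℤ) - 2 < pathVal g n := by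
      have := hil.2
      omega
    obtain ⟨k, hk⟩ := hev
    omega


lemma newNegMin_phiG_iff (hg : Mea g) (i : ℕ) :
    NewNegMin (PhiG g) i ↔ LastLow g i := by
  constructor
  · intro h
    have hin : i < n := newNegMin_lt (PhiG g) h
    by_contra hnl
    have hll : llcnt g (i + 1) = llcnt g i := by rw [llcnt_succ, if_neg hnl]; simp
    have hS1 := pathVal_phiG g hg (i + 1)
    rcases Nat.eq_zero_or_pos (llcnt g i) with h0 | hpos
    · rw [hll, h0] at hS1
      have := hg (i + 1) (by omega)
      have := h.1
      omega
    · obtain ⟨i', hil, hit, hval⟩ := llcnt_pos_struct g hg hpos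
      have hi'n : i' < n := lastLow_lt g hg hil
      have hSi' : pathVal (PhiG g) (i' + 1) = -(llcnt g i : ℤ) := by
        rw [pathVal_phiG g hg, pathVal_succ g hi'n, lastLow_step g hg hil hi'n,
          llcnt_succ, if_pos hil]
        have := llcnt_val g hg hil
        simp only [if_true]
        push_cast
        omega
      have hSlb : -(llcnt g i : ℤ) ≤ pathVal (PhiG g) (i + 1) := by
        rw [hS1, hll]
        have := llcnt_le_pathVal g hg (show i + 1 ≤ n by omega)
        omega
      have := h.2 (i' + 1) (by simp; omega)
      omega
  · intro h
    have hin : i < n := lastLow_lt g hg h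
    have hstep : pathVal g (i + 1) = pathVal g i + 1 := by
      rw [pathVal_succ g hin, lastLow_step g hg h hin]; norm_num
    have hll : llcnt g (i + 1) = llcnt g i + 1 := by rw [llcnt_succ, if_pos h]
    have hSi1 : pathVal (PhiG g) (i + 1) = -(pathVal g i) - 1 := by
      rw [pathVal_phiG g hg, hstep, hll, ← llcnt_val g hg h]
      push_cast
      ring
    have hZi : 0 ≤ pathVal g i := hg i (by omega)
    constructor
    · omega
    · intro j hj
      simp only [Finset.mem_range] at hj
      have hSj := pathVal_phiG g hg j
      have h1 := llcnt_le_pathVal g hg (show j ≤ n by omega)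
      have h2 := llcnt_mono g (show j ≤ i by omega)
      have h3 := llcnt_val g hg h
      omega

lemma psiG_phiG (hg : Mea g) : PsiG (PhiG g) = g := by
  funext i
  unfold PsiG
  simp only [newNegMin_phiG_iff g hg]
  by_cases h : LastLow g (i : ℕ)
  · rw [if_pos h, lastLow_step g hg h i.isLt]
  · rw [if_neg h]
    simp [PhiG, h]


lemma isPeak_psiG (x : ℕ) : IsPeak f x ↔ IsPeak (PsiG f) x := by
  constructor
  · rintro ⟨hx, hxn, hup, hdn⟩
    refine ⟨hx, hxn, ?_, ?_⟩
    · have hnm : ¬ NewNegMin f (x - 1) := by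
        intro hm
        have hv := (newNegMin_val f hm).2
        have hv1 := (newNegMin_val f hm).1
        rw [show x - 1 + 1 = x by omega] at hv
        omega
      have hc : cnt f x = cnt f (x - 1) := by
        have := cnt_succ f (x - 1)
        rw [show x - 1 + 1 = x by omega] at this
        rw [this, if_neg hnm]; simp
      rw [pathVal_psiG, pathVal_psiG, hc, hup]
      push_cast; ring
    · have hnm : ¬ NewNegMin f x := by
        intro hm
        have h2 := hm.2 (x - 1) (by simp)
        omega
      have hc : cnt f (x + 1) = cnt f x := by rw [cnt_succ, if_neg hnm]; simp
      rw [pathVal_psiG, pathVal_psiG, hc, hdn]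
      push_cast; ring
  · rintro ⟨hx, hxn, hup, hdn⟩
    rw [pathVal_psiG, pathVal_psiG] at hup hdn
    have hnmx : ¬ NewNegMin f x := by
      intro hm
      have hv := (newNegMin_val f hm).2
      have hv1 := (newNegMin_val f hm).1
      have hc : cnt f (x + 1) = cnt f x + 1 := by rw [cnt_succ, if_pos hm]
      push_cast [hc] at hdn
      omega
    have hc1 : cnt f (x + 1) = cnt f x := by rw [cnt_succ, if_neg hnmx]; simp
    rw [hc1] at hdn
    have hdn' : pathVal f (x + 1) = pathVal f x - 1 := by omega
    have hnm1 : ¬ NewNegMin f (x - 1) := by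
      intro hm
      apply hnmx
      have h1 := hm.1
      have h2 := hm.2
      rw [show x - 1 + 1 = x by omega] at h1 h2
      refine ⟨by omega, ?_⟩
      intro j hj
      simp only [Finset.mem_range] at hj
      rcases Nat.lt_or_ge j x with hjx | hjx
      · have := h2 j (by simp; omega)
        omega
      · have : j = x := by omega
        rw [this]
        omega
    have hc2 : cnt f x = cnt f (x - 1) := by
      have := cnt_succ f (x - 1)
      rw [show x - 1 + 1 = x by omega] at this
      rw [this, if_neg hnm1]; simp
    rw [hc2] at hup
    exact ⟨hx, hxn, by omega, hdn'⟩

lemma numPeaks_psiG : numPeaks (PsiG f) = numPeaks f := by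
  unfold numPeaks
  congr 1
  apply Finset.filter_congr
  intro x _
  simp [isPeak_psiG f x]


end PsiProof

/-- `Ψ₂ₙ` is a bijection from bridges of length `2N` onto meanders of length
`2N`; it restricts, for each `k`, to a bijection from bridges with exactly `k`
peaks onto meanders with exactly `k` peaks, and it preserves peak positions. -/
theorem psi_bijOn (N : ℕ) :
    Set.BijOn (Psi (N := N))
      {f | pathVal f (2 * N) = 0} {f | IsNonneg f} ∧
    (∀ k : ℕ,
      Set.BijOn (Psi (N := N))
        {f | pathVal f (2 * N) = 0 ∧ numPeaks f = k}
        {f | IsNonneg f ∧ numPeaks f = k}) ∧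
    (∀ f : Fin (2 * N) → Bool, pathVal f (2 * N) = 0 →
      ∀ x : ℕ, IsPeak f x ↔ IsPeak (Psi f) x) := by
  classical
  have hPsi : ∀ f : Fin (2 * N) → Bool, Psi f = PsiProof.PsiG f := fun f => rfl
  have hmea : ∀ g : Fin (2 * N) → Bool, IsNonneg g → PsiProof.Mea g :=
    fun g hg i hi => hg i (Finset.mem_range.mpr (by omega))
  have hdvd : (2 : ℤ) ∣ ((2 * N : ℕ) : ℤ) := ⟨(N : ℤ), by push_cast; ring⟩
  have hmapsPsi : Set.MapsTo (Psi (N := N)) {f | pathVal f (2 * N) = 0} {f | IsNonneg f} := by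
    intro f _
    simp only [Set.mem_setOf_eq]
    intro i _
    rw [hPsi]
    exact PsiProof.psiG_nonneg f i
  have hmapsPhi : Set.MapsTo (PsiProof.PhiG) {f | IsNonneg f} {f | pathVal f (2 * N) = 0} :=
    fun g hg => PsiProof.pathVal_phiG_end g (hmea g hg) hdvd
  have hinv : Set.InvOn PsiProof.PhiG (Psi (N := N))
      {f | pathVal f (2 * N) = 0} {f | IsNonneg f} := by
    constructor
    · intro f hf
      rw [hPsi]
      exact PsiProof.phiG_psiG f hf
    · intro g hg
      rw [hPsi]
      exact PsiProof.psiG_phiG g (hmea g hg)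
  have hnum : ∀ f : Fin (2 * N) → Bool, numPeaks (Psi (N := N) f) = numPeaks f :=
    fun f => by rw [hPsi]; exact PsiProof.numPeaks_psiG f
  refine ⟨hinv.bijOn hmapsPsi hmapsPhi, fun k => ?_,
    fun f _ x => by rw [hPsi]; exact PsiProof.isPeak_psiG f x⟩
  refine Set.InvOn.bijOn ⟨fun f hf => hinv.1 hf.1, fun g hg => hinv.2 hg.1⟩ ?_ ?_
  · rintro f ⟨hf1, hf2⟩
    exact ⟨hmapsPsi hf1, by rw [hnum f, hf2]⟩
  · rintro g ⟨hg1, hg2⟩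
    refine ⟨hmapsPhi hg1, ?_⟩
    have hh := hnum (PsiProof.PhiG g)
    rw [hPsi, PsiProof.psiG_phiG g (hmea g hg1)] at hh
    rw [← hh, hg2]
end
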